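/- arXiv:1202.3064 — 7 statements merged into one kernel-verified Lean document; each statement's English description precedes it below -/
import Mathlib

section
/- Let k ≥ 1, n = 4k+2, m = 2k, and let 1 ≥ λ₂ ≥ ... ≥ λₙ ≥ −1 be real numbers with 1 + λ₂ + ... + λₙ ≥ 0. Let α₁ < α₂ < ... < α_m be the increasing enumeration of {3} ∪ {j : 6 ≤ j ≤ n, j ≡ 2 or 3 (mod 4)} (namely 3, 6, 7, 10, 11, ..., n−4, n−3, n), and let β₁ < ... < β_m be the increasing enumeration of {j : 4 ≤ j ≤ n−1, j ≡ 0 or 1 (mod 4)} (namely 4, 5, 8, 9, ..., n−2, n−1). If both 1/n + ((n−m−1)/(n(m+1)))·λ₂ + Σ_{j=1}^{m} λ_{α_j}/((m−j+1)(m−j+2)) ≥ 0 and 1/n + ((n−m−1)/(n(m+1)))·λ₂ + Σ_{j=1}^{m} λ_{β_j}/((m−j+1)(m−j+2)) ≥ 0 hold, then there exists an n×n symmetric doubly stochastic matrix whose eigenvalues, counted with algebraic multiplicity, are 1, λ₂, ..., λₙ. -/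
open Matrix Polynomial

/-- A real square matrix is doubly stochastic if its entries are nonnegative and all of its
row sums and column sums are equal to `1`. -/
def DoublyStochastic {n : ℕ} (D : Matrix (Fin n) (Fin n) ℝ) : Prop :=
  (∀ i j, 0 ≤ D i j) ∧ (∀ i, ∑ j, D i j = 1) ∧ (∀ j, ∑ i, D i j = 1)

namespace SDIEP
open Finset


/-- chain Soules vector `t` (for `1 ≤ t`), entry at position `j`. -/
noncomputable def ch (t j : ℕ) : ℝ :=
  if j < t then 1 / Real.sqrt (t * (t+1))
  else if j = t then -(t / Real.sqrt (t * (t+1)))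
  else 0

lemma st_pos {t : ℕ} (ht : 1 ≤ t) : (0:ℝ) < Real.sqrt (t * (t+1)) := by
  apply Real.sqrt_pos.2
  have : (1:ℝ) ≤ (t:ℝ) := by exact_mod_cast ht
  positivity

lemma st_sq (t : ℕ) : Real.sqrt (t * (t+1)) * Real.sqrt (t * (t+1)) = (t:ℝ) * (t+1) := by
  apply Real.mul_self_sqrt; positivity

lemma ch_lt {t j : ℕ} (h : j < t) : ch t j = 1 / Real.sqrt (t * (t+1)) := by
  simp only [ch]; rw [if_pos h]

lemma ch_eq {t : ℕ} : ch t t = -(t / Real.sqrt (t * (t+1))) := by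
  simp only [ch]; rw [if_neg (lt_irrefl t)]; simp

lemma ch_gt {t j : ℕ} (h : t < j) : ch t j = 0 := by
  simp only [ch]; rw [if_neg (by omega), if_neg (by omega)]

lemma ch_sum {m t : ℕ} (ht : 1 ≤ t) (htm : t ≤ m) :
    ∑ j ∈ range (m+1), ch t j = 0 := by
  have hsub : ∑ j ∈ range (m+1), ch t j = ∑ j ∈ range (t+1), ch t j := by
    refine (Finset.sum_subset (by simp; omega) ?_).symm
    intro x _ hx
    simp only [mem_range, not_lt] at hx
    exact ch_gt (by omega)
  rw [hsub, Finset.sum_range_succ]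
  have h1 : ∑ j ∈ range t, ch t j = t * (1 / Real.sqrt (t * (t+1))) := by
    rw [Finset.sum_congr rfl (fun j hj => ch_lt (mem_range.1 hj)), Finset.sum_const,
      card_range, nsmul_eq_mul]
  rw [h1, ch_eq]; ring

lemma ch_sum_sq {m t : ℕ} (ht : 1 ≤ t) (htm : t ≤ m) :
    ∑ j ∈ range (m+1), ch t j * ch t j = 1 := by
  have hsub : ∑ j ∈ range (m+1), ch t j * ch t j = ∑ j ∈ range (t+1), ch t j * ch t j := by
    refine (Finset.sum_subset (by simp; omega) ?_).symm
    intro x _ hx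
    simp only [mem_range, not_lt] at hx
    rw [ch_gt (by omega), mul_zero]
  rw [hsub, Finset.sum_range_succ]
  have h1 : ∑ j ∈ range t, ch t j * ch t j
      = t * (1 / Real.sqrt (t * (t+1)) * (1 / Real.sqrt (t * (t+1)))) := by
    rw [Finset.sum_congr rfl (fun j hj => by rw [ch_lt (mem_range.1 hj)]), Finset.sum_const,
      card_range, nsmul_eq_mul]
  rw [h1, ch_eq]
  set s := Real.sqrt (t * (t+1)) with hsdef
  have hs : s * s = (t:ℝ) * (t+1) := st_sq t
  have hpos : (0:ℝ) < s := st_pos ht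
  have ht' : (1:ℝ) ≤ (t:ℝ) := by exact_mod_cast ht
  have hne : s ≠ 0 := ne_of_gt hpos
  field_simp
  nlinarith [hs]

lemma ch_orth {m t t' : ℕ} (ht : 1 ≤ t) (htt : t < t') (ht'm : t' ≤ m) :
    ∑ j ∈ range (m+1), ch t j * ch t' j = 0 := by
  have key : ∀ j ∈ range (m+1), ch t j * ch t' j = ch t j * (1 / Real.sqrt (t' * (t'+1))) := by
    intro j _
    by_cases hj : j ≤ t
    · rw [show ch t' j = 1 / Real.sqrt (t' * (t'+1)) from ch_lt (by omega)]
    · rw [show ch t j = 0 from ch_gt (by omega), zero_mul, zero_mul]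
  rw [Finset.sum_congr rfl key, ← Finset.sum_mul, ch_sum ht (le_trans (le_of_lt htt) ht'm),
    zero_mul]




lemma tele (a : ℕ) : ∀ c, a ≤ c →
    ∑ t ∈ Icc (a+1) c, (1:ℝ)/(t*(t+1)) = 1/((a:ℝ)+1) - 1/((c:ℝ)+1) := by
  refine Nat.le_induction ?_ ?_
  · rw [show Icc (a+1) a = ∅ from Icc_eq_empty (by omega)]
    simp
  · intro c hc ih
    rw [Finset.sum_Icc_succ_top (by omega), ih]
    have h1 : ((c:ℝ)+1) ≠ 0 := by positivity
    have h2 : ((c:ℝ)+1+1) ≠ 0 := by positivity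
    push_cast
    field_simp
    ring

lemma sum_nu_le (b : ℕ) (hb : 1 ≤ b) (ν : ℕ → ℝ) (c : ℝ)
    (h : ∀ t, 1 ≤ t → t ≤ b → ν t ≤ c) :
    ∑ t ∈ Icc 1 b, ν t / ((t:ℝ)*(t+1)) ≤ c * (1 - 1/((b:ℝ)+1)) := by
  have : ∑ t ∈ Icc 1 b, ν t / ((t:ℝ)*(t+1)) ≤ ∑ t ∈ Icc 1 b, c * (1/((t:ℝ)*(t+1))) := by
    refine Finset.sum_le_sum (fun t ht => ?_)
    rw [mem_Icc] at ht
    have htpos : (0:ℝ) < (t:ℝ)*(t+1) := by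
      have : (1:ℝ) ≤ (t:ℝ) := by exact_mod_cast ht.1
      positivity
    rw [mul_one_div]
    gcongr
    exact h t ht.1 ht.2
  rw [← Finset.mul_sum] at this
  have ht0 := tele 0 b (Nat.zero_le b)
  rw [show (0:ℕ)+1 = 1 from rfl, Nat.cast_zero, show (1:ℝ)/((0:ℝ)+1) = 1 by norm_num] at ht0
  rw [ht0] at this
  exact this

lemma sum_nu_ge (b m : ℕ) (hbm : b ≤ m) (ν : ℕ → ℝ) (c : ℝ)
    (h : ∀ t, b+1 ≤ t → t ≤ m → c ≤ ν t) :
    c * (1/((b:ℝ)+1) - 1/((m:ℝ)+1)) ≤ ∑ t ∈ Icc (b+1) m, ν t / ((t:ℝ)*(t+1)) := by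
  have : ∑ t ∈ Icc (b+1) m, c * (1/((t:ℝ)*(t+1))) ≤ ∑ t ∈ Icc (b+1) m, ν t / ((t:ℝ)*(t+1)) := by
    refine Finset.sum_le_sum (fun t ht => ?_)
    rw [mem_Icc] at ht
    have htpos : (0:ℝ) < (t:ℝ)*(t+1) := by
      have : (1:ℝ) ≤ (t:ℝ) := by exact_mod_cast le_trans (by omega) ht.1
      positivity
    rw [mul_one_div]
    gcongr
    exact h t ht.1 ht.2
  rwa [← Finset.mul_sum, tele b m hbm] at this

lemma sum_split (b m : ℕ) (hb : b ≤ m) (f : ℕ → ℝ) :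
    ∑ t ∈ Icc 1 m, f t = ∑ t ∈ Icc 1 b, f t + ∑ t ∈ Icc (b+1) m, f t := by
  have h := Finset.sum_Ioc_consecutive f (Nat.zero_le b) hb
  simp only [← Finset.Icc_add_one_left_eq_Ioc] at h
  rw [show Icc (0+1) b = Icc 1 b by norm_num, show Icc (0+1) m = Icc 1 m by norm_num] at h
  exact h.symm

lemma key_offdiag (m b : ℕ) (hb1 : 1 ≤ b) (hbm : b ≤ m) (ν : ℕ → ℝ) (l2 : ℝ)
    (hl2 : l2 ≤ 1)
    (hmono : ∀ s t, 1 ≤ s → s ≤ t → t ≤ m → ν s ≤ ν t) (htop : ν m ≤ l2)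
    (hS : 0 ≤ 1/(2*(m:ℝ)+2) + l2/(2*(m:ℝ)+2) + ∑ t ∈ Icc 1 m, ν t / ((t:ℝ)*(t+1))) :
    0 ≤ 1/(2*(m:ℝ)+2) + l2/(2*(m:ℝ)+2) +
      (∑ t ∈ Icc (b+1) m, ν t / ((t:ℝ)*(t+1)) - ν b/((b:ℝ)+1)) := by
  have hm : 1 ≤ m := le_trans hb1 hbm
  have hsplit := sum_split b m hbm (fun t => ν t / ((t:ℝ)*(t+1)))
  rcases le_or_gt (ν b) 0 with hνb | hνb
  · have h1 : ∑ t ∈ Icc 1 b, ν t / ((t:ℝ)*(t+1)) ≤ ν b * (1 - 1/((b:ℝ)+1)) :=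
      sum_nu_le b hb1 ν (ν b) (fun t ht htb => hmono t b ht htb hbm)
    have e1 : ν b * (1 - 1/((b:ℝ)+1)) + ν b * (1/((b:ℝ)+1)) = ν b := by ring
    have e2 : ν b * (1/((b:ℝ)+1)) = ν b / ((b:ℝ)+1) := by ring
    linarith
  · have h2 : ν b * (1/((b:ℝ)+1) - 1/((m:ℝ)+1)) ≤ ∑ t ∈ Icc (b+1) m, ν t / ((t:ℝ)*(t+1)) :=
      sum_nu_ge b m hbm ν (ν b) (fun t ht htm => hmono b t hb1 (by omega) htm)
    have hbl2 : ν b ≤ l2 := le_trans (hmono b m hb1 hbm (le_refl m)) htop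
    have hb1' : ν b ≤ 1 := le_trans hbl2 hl2
    have hmpos : (0:ℝ) < 2*(m:ℝ)+2 := by positivity
    have hd1 : ν b/(2*(m:ℝ)+2) ≤ l2/(2*(m:ℝ)+2) := by gcongr
    have hd2 : ν b/(2*(m:ℝ)+2) ≤ 1/(2*(m:ℝ)+2) := by gcongr
    have hbpos : ((b:ℝ)+1) ≠ 0 := by positivity
    have hmne : ((m:ℝ)+1) ≠ 0 := by positivity
    have e2 : ν b * (1/((b:ℝ)+1) - 1/((m:ℝ)+1))
        = ν b/((b:ℝ)+1) - 2*(ν b/(2*(m:ℝ)+2)) := by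
      field_simp
    linarith

lemma key_diag (m a : ℕ) (ha1 : 1 ≤ a) (ham : a ≤ m) (ν : ℕ → ℝ) (l2 : ℝ)
    (hmono : ∀ s t, 1 ≤ s → s ≤ t → t ≤ m → ν s ≤ ν t)
    (hS : 0 ≤ 1/(2*(m:ℝ)+2) + l2/(2*(m:ℝ)+2) + ∑ t ∈ Icc 1 m, ν t / ((t:ℝ)*(t+1))) :
    0 ≤ 1/(2*(m:ℝ)+2) + l2/(2*(m:ℝ)+2) +
      (∑ t ∈ Icc (a+1) m, ν t / ((t:ℝ)*(t+1)) + ν a * ((a:ℝ)/((a:ℝ)+1))) := by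
  have hsplit := sum_split a m ham (fun t => ν t / ((t:ℝ)*(t+1)))
  have h1 : ∑ t ∈ Icc 1 a, ν t / ((t:ℝ)*(t+1)) ≤ ν a * (1 - 1/((a:ℝ)+1)) :=
    sum_nu_le a ha1 ν (ν a) (fun t ht hta => hmono t a ht hta ham)
  have hane : ((a:ℝ)+1) ≠ 0 := by positivity
  have e1 : ν a * ((a:ℝ)/((a:ℝ)+1)) = ν a * (1 - 1/((a:ℝ)+1)) := by
    field_simp
    ring
  linarith




noncomputable def pe (m : ℕ) (i v : ℕ) : ℝ :=
  if v = 0 then 1/Real.sqrt (2*m+2)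
  else if v = 1 then (if i ≤ m then 1/Real.sqrt (2*m+2) else -(1/Real.sqrt (2*m+2)))
  else if v ≤ m+1 then (if i ≤ m then ch (v-1) i else 0)
  else (if i ≤ m then 0 else ch (v-m-1) (i-m-1))

noncomputable def cc (m : ℕ) : ℝ := 1/Real.sqrt (2*m+2)

lemma pe_zero (m i : ℕ) : pe m i 0 = cc m := by simp [pe, cc]

lemma pe_one_A {m i : ℕ} (h : i ≤ m) : pe m i 1 = cc m := by simp [pe, cc, h]

lemma pe_one_B {m i : ℕ} (h : ¬ i ≤ m) : pe m i 1 = -(cc m) := by simp [pe, cc, h]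

lemma pe_A_A {m i v : ℕ} (h2 : 2 ≤ v) (hv : v ≤ m+1) (h : i ≤ m) : pe m i v = ch (v-1) i := by
  simp only [pe]; rw [if_neg (by omega), if_neg (by omega), if_pos hv, if_pos h]

lemma pe_A_B {m i v : ℕ} (h2 : 2 ≤ v) (hv : v ≤ m+1) (h : ¬ i ≤ m) : pe m i v = 0 := by
  simp only [pe]; rw [if_neg (by omega), if_neg (by omega), if_pos hv, if_neg h]

lemma pe_B_A {m i v : ℕ} (hv : m+2 ≤ v) (h : i ≤ m) : pe m i v = 0 := by
  simp only [pe]; rw [if_neg (by omega), if_neg (by omega), if_neg (by omega), if_pos h]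

lemma pe_B_B {m i v : ℕ} (hv : m+2 ≤ v) (h : ¬ i ≤ m) : pe m i v = ch (v-m-1) (i-m-1) := by
  simp only [pe]; rw [if_neg (by omega), if_neg (by omega), if_neg (by omega), if_neg h]

lemma c_sq (m : ℕ) : cc m * cc m = 1/(2*(m:ℝ)+2) := by
  rw [cc, div_mul_div_comm, one_mul, Real.mul_self_sqrt (by positivity)]

lemma possplit (m : ℕ) (G : ℕ → ℝ) :
    ∑ i ∈ range (2*m+2), G i = ∑ j ∈ range (m+1), G j + ∑ j ∈ range (m+1), G (m+1+j) := by
  rw [show 2*m+2 = (m+1)+(m+1) by omega, Finset.sum_range_add]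

lemma gram_le (m : ℕ) (hm : 1 ≤ m) (u v : ℕ) (hv : v < 2*m+2) (huv : u ≤ v) :
    ∑ i ∈ range (2*m+2), pe m i u * pe m i v = if u = v then 1 else 0 := by
  have hmem : ∀ j ∈ range (m+1), j ≤ m := fun j hj => by
    have := mem_range.1 hj; omega
  have hmem' : ∀ j : ℕ, ¬ (m+1+j ≤ m) := fun j => by omega
  have hsq := c_sq m
  rw [possplit]
  by_cases hu0 : u = 0
  · subst hu0
    by_cases hv0 : v = 0
    · subst hv0
      have eA : ∀ j ∈ range (m+1), pe m j 0 * pe m j 0 = cc m * cc m := fun j hj => by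
        rw [pe_zero]
      have eB : ∀ j ∈ range (m+1), pe m (m+1+j) 0 * pe m (m+1+j) 0 = cc m * cc m := fun j hj => by
        rw [pe_zero]
      rw [if_pos rfl, Finset.sum_congr rfl eA, Finset.sum_congr rfl eB, Finset.sum_const,
        card_range, nsmul_eq_mul, hsq]
      push_cast
      field_simp
      ring
    · rw [if_neg (by omega)]
      by_cases hv1 : v = 1
      · subst hv1
        have eA : ∀ j ∈ range (m+1), pe m j 0 * pe m j 1 = cc m * cc m := fun j hj => by
          rw [pe_zero, pe_one_A (hmem j hj)]
        have eB : ∀ j ∈ range (m+1), pe m (m+1+j) 0 * pe m (m+1+j) 1 = -(cc m * cc m) :=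
          fun j hj => by rw [pe_zero, pe_one_B (hmem' j)]; ring
        rw [Finset.sum_congr rfl eA, Finset.sum_congr rfl eB]
        simp only [Finset.sum_const, card_range, nsmul_eq_mul]
        ring
      · by_cases hvA : v ≤ m+1
        · have eA : ∀ j ∈ range (m+1), pe m j 0 * pe m j v = cc m * ch (v-1) j := fun j hj => by
            rw [pe_zero, pe_A_A (by omega) hvA (hmem j hj)]
          have eB : ∀ j ∈ range (m+1), pe m (m+1+j) 0 * pe m (m+1+j) v = 0 := fun j hj => by
            rw [pe_zero, pe_A_B (v := v) (by omega) hvA (hmem' j), mul_zero]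
          rw [Finset.sum_congr rfl eA, Finset.sum_congr rfl eB, ← Finset.mul_sum,
            ch_sum (t := v-1) (by omega) (by omega)]
          simp
        · have eA : ∀ j ∈ range (m+1), pe m j 0 * pe m j v = 0 := fun j hj => by
            rw [pe_zero, pe_B_A (v := v) (by omega) (hmem j hj), mul_zero]
          have eB : ∀ j ∈ range (m+1), pe m (m+1+j) 0 * pe m (m+1+j) v
              = cc m * ch (v-m-1) j := fun j hj => by
            rw [pe_zero, pe_B_B (v := v) (by omega) (hmem' j), show m+1+j-m-1 = j by omega]
          rw [Finset.sum_congr rfl eA, Finset.sum_congr rfl eB, ← Finset.mul_sum,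
            ch_sum (t := v-m-1) (by omega) (by omega)]
          simp
  · by_cases hu1 : u = 1
    · subst hu1
      by_cases hv1 : v = 1
      · subst hv1
        have eA : ∀ j ∈ range (m+1), pe m j 1 * pe m j 1 = cc m * cc m := fun j hj => by
          rw [pe_one_A (hmem j hj)]
        have eB : ∀ j ∈ range (m+1), pe m (m+1+j) 1 * pe m (m+1+j) 1 = cc m * cc m := fun j hj => by
          rw [pe_one_B (hmem' j), neg_mul_neg]
        rw [if_pos rfl, Finset.sum_congr rfl eA, Finset.sum_congr rfl eB, Finset.sum_const,
          card_range, nsmul_eq_mul, hsq]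
        push_cast
        field_simp
        ring
      · rw [if_neg (by omega)]
        by_cases hvA : v ≤ m+1
        · have eA : ∀ j ∈ range (m+1), pe m j 1 * pe m j v = cc m * ch (v-1) j := fun j hj => by
            rw [pe_one_A (hmem j hj), pe_A_A (by omega) hvA (hmem j hj)]
          have eB : ∀ j ∈ range (m+1), pe m (m+1+j) 1 * pe m (m+1+j) v = 0 := fun j hj => by
            rw [pe_A_B (v := v) (by omega) hvA (hmem' j), mul_zero]
          rw [Finset.sum_congr rfl eA, Finset.sum_congr rfl eB, ← Finset.mul_sum,
            ch_sum (t := v-1) (by omega) (by omega)]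
          simp
        · have eA : ∀ j ∈ range (m+1), pe m j 1 * pe m j v = 0 := fun j hj => by
            rw [pe_B_A (v := v) (by omega) (hmem j hj), mul_zero]
          have eB : ∀ j ∈ range (m+1), pe m (m+1+j) 1 * pe m (m+1+j) v
              = (-(cc m)) * ch (v-m-1) j := fun j hj => by
            rw [pe_one_B (hmem' j), pe_B_B (v := v) (by omega) (hmem' j),
              show m+1+j-m-1 = j by omega, neg_mul]
          rw [Finset.sum_congr rfl eA, Finset.sum_congr rfl eB, ← Finset.mul_sum,
            ch_sum (t := v-m-1) (by omega) (by omega)]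
          simp
    · by_cases huA : u ≤ m+1
      · by_cases hvA : v ≤ m+1
        · have eA : ∀ j ∈ range (m+1), pe m j u * pe m j v
              = ch (u-1) j * ch (v-1) j := fun j hj => by
            rw [pe_A_A (v := u) (by omega) huA (hmem j hj),
              pe_A_A (v := v) (by omega) hvA (hmem j hj)]
          have eB : ∀ j ∈ range (m+1), pe m (m+1+j) u * pe m (m+1+j) v = 0 := fun j hj => by
            rw [pe_A_B (v := u) (by omega) huA (hmem' j), zero_mul]
          rw [Finset.sum_congr rfl eA, Finset.sum_congr rfl eB, Finset.sum_const, smul_zero,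
            add_zero]
          by_cases huv' : u = v
          · subst huv'
            rw [if_pos rfl, ch_sum_sq (t := u-1) (by omega) (by omega)]
          · rw [if_neg huv', ch_orth (t := u-1) (t' := v-1) (by omega) (by omega) (by omega)]
        · rw [if_neg (by omega)]
          have eA : ∀ j ∈ range (m+1), pe m j u * pe m j v = 0 := fun j hj => by
            rw [pe_B_A (v := v) (by omega) (hmem j hj), mul_zero]
          have eB : ∀ j ∈ range (m+1), pe m (m+1+j) u * pe m (m+1+j) v = 0 := fun j hj => by
            rw [pe_A_B (v := u) (by omega) huA (hmem' j), zero_mul]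
          rw [Finset.sum_congr rfl eA, Finset.sum_congr rfl eB]
          simp
      · have eA : ∀ j ∈ range (m+1), pe m j u * pe m j v = 0 := fun j hj => by
          rw [pe_B_A (v := u) (by omega) (hmem j hj), zero_mul]
        have eB : ∀ j ∈ range (m+1), pe m (m+1+j) u * pe m (m+1+j) v
            = ch (u-m-1) j * ch (v-m-1) j := fun j hj => by
          rw [pe_B_B (v := u) (by omega) (hmem' j), pe_B_B (v := v) (by omega) (hmem' j),
            show m+1+j-m-1 = j by omega]
        rw [Finset.sum_congr rfl eA, Finset.sum_congr rfl eB, Finset.sum_const, smul_zero,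
          zero_add]
        by_cases huv' : u = v
        · subst huv'
          rw [if_pos rfl, ch_sum_sq (t := u-m-1) (by omega) (by omega)]
        · rw [if_neg huv',
            ch_orth (t := u-m-1) (t' := v-m-1) (by omega) (by omega) (by omega)]

lemma gram (m : ℕ) (hm : 1 ≤ m) (u v : ℕ) (hu : u < 2*m+2) (hv : v < 2*m+2) :
    ∑ i ∈ range (2*m+2), pe m i u * pe m i v = if u = v then 1 else 0 := by
  rcases le_total u v with h | h
  · exact gram_le m hm u v hv h
  · rw [Finset.sum_congr rfl fun i _ => mul_comm (pe m i u) (pe m i v),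
      gram_le m hm v u hu h]
    by_cases huv : u = v
    · simp [huv]
    · rw [if_neg (Ne.symm huv), if_neg huv]




/-! ### index functions -/

def al (j : ℕ) : ℕ := if j = 1 then 3 else if Odd j then 2*j+1 else 2*j+2
def be (j : ℕ) : ℕ := if Odd j then 2*j+2 else 2*j+1

lemma al_ge {j : ℕ} (h : 2 ≤ j) : 2*j+1 ≤ al j := by
  unfold al; split_ifs <;> omega

lemma al_bounds {j : ℕ} (h : 1 ≤ j) : 3 ≤ al j ∧ al j ≤ 2*j+2 := by
  unfold al; split_ifs <;> omega

lemma be_bounds (j : ℕ) : 2*j+1 ≤ be j ∧ be j ≤ 2*j+2 := by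
  unfold be; split_ifs <;> omega

lemma al_mono {s t : ℕ} (hs : 1 ≤ s) (hst : s ≤ t) : al s ≤ al t := by
  rcases eq_or_lt_of_le hst with rfl | h
  · exact le_refl _
  · have h1 := (al_bounds hs).2
    have h2 := al_ge (show 2 ≤ t by omega)
    omega

lemma be_mono {s t : ℕ} (hst : s ≤ t) : be s ≤ be t := by
  rcases eq_or_lt_of_le hst with rfl | h
  · exact le_refl _
  · have h1 := (be_bounds s).2
    have h2 := (be_bounds t).1
    omega

noncomputable def mu (m : ℕ) (L : ℕ → ℝ) (v : ℕ) : ℝ :=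
  if v = 0 then 1 else if v = 1 then L 2
  else if v ≤ m+1 then L (al (m+2-v)) else L (be (2*m+2-v))

lemma mu_zero (m : ℕ) (L : ℕ → ℝ) : mu m L 0 = 1 := by simp [mu]

lemma mu_one (m : ℕ) (L : ℕ → ℝ) : mu m L 1 = L 2 := by simp [mu]

lemma mu_A {m t : ℕ} (L : ℕ → ℝ) (ht : t < m) : mu m L (2+t) = L (al (m-t)) := by
  unfold mu
  rw [if_neg (by omega), if_neg (by omega), if_pos (by omega), show m+2-(2+t) = m-t by omega]

lemma mu_B {m t : ℕ} (L : ℕ → ℝ) (ht : t < m) : mu m L (2+m+t) = L (be (m-t)) := by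
  unfold mu
  rw [if_neg (by omega), if_neg (by omega), if_neg (by omega),
    show 2*m+2-(2+m+t) = m-t by omega]

/-- antitonicity of `L` on `[2, n]`. -/
lemma L_anti {L : ℕ → ℝ} {n : ℕ} (hdec : ∀ j, 2 ≤ j → j < n → L (j + 1) ≤ L j) :
    ∀ i j, 2 ≤ i → i ≤ j → j ≤ n → L j ≤ L i := by
  intro i j hi
  induction j with
  | zero => intro h1 _; exact absurd h1 (by omega)
  | succ j ih =>
    intro h1 h2
    rcases Nat.lt_or_ge i (j+1) with h | h
    · exact le_trans (hdec j (by omega) (by omega)) (ih (by omega) (by omega))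
    · have : i = j + 1 := by omega
      rw [this]

/-! ### the entry function of the doubly stochastic matrix -/

noncomputable def dent (m : ℕ) (L : ℕ → ℝ) (x y : ℕ) : ℝ :=
  ∑ v ∈ range (2*m+2), pe m x v * mu m L v * pe m y v

lemma dent_symm (m : ℕ) (L : ℕ → ℝ) (x y : ℕ) : dent m L x y = dent m L y x :=
  Finset.sum_congr rfl fun v _ => by ring

lemma colsplit (m : ℕ) (F : ℕ → ℝ) :
    ∑ v ∈ range (2*m+2), F v
      = F 0 + F 1 + ∑ t ∈ range m, F (2+t) + ∑ t ∈ range m, F (2+m+t) := by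
  rw [show 2*m+2 = 2+m+m by omega, Finset.sum_range_add, Finset.sum_range_add,
    Finset.sum_range_succ, Finset.sum_range_one]

lemma icc_to_range (m : ℕ) (f : ℕ → ℝ) :
    ∑ t ∈ Icc 1 m, f t = ∑ t ∈ range m, f (1+t) := by
  rw [← Finset.Ico_add_one_right_eq_Icc, Finset.sum_Ico_eq_sum_range, show m+1-1 = m from rfl]

lemma dent_AA {m : ℕ} (L : ℕ → ℝ) {a b : ℕ} (ha : a ≤ m) (hb : b ≤ m) :
    dent m L a b = 1/(2*(m:ℝ)+2) + L 2/(2*(m:ℝ)+2)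
      + ∑ t ∈ Icc 1 m, L (al (m+1-t)) * (ch t a * ch t b) := by
  unfold dent
  rw [colsplit]
  have e0 : pe m a 0 * mu m L 0 * pe m b 0 = 1/(2*(m:ℝ)+2) := by
    rw [pe_zero, pe_zero, mu_zero, mul_one, c_sq]
  have e1 : pe m a 1 * mu m L 1 * pe m b 1 = L 2/(2*(m:ℝ)+2) := by
    rw [pe_one_A ha, pe_one_A hb, mu_one,
      show cc m * L 2 * cc m = L 2 * (cc m * cc m) by ring, c_sq, mul_one_div]
  have eA : ∀ t ∈ range m, pe m a (2+t) * mu m L (2+t) * pe m b (2+t)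
      = L (al (m-t)) * (ch (1+t) a * ch (1+t) b) := fun t ht => by
    have htm := mem_range.1 ht
    rw [pe_A_A (by omega) (by omega) ha, pe_A_A (by omega) (by omega) hb, mu_A L htm,
      show 2+t-1 = 1+t by omega]
    ring
  have eB : ∀ t ∈ range m, pe m a (2+m+t) * mu m L (2+m+t) * pe m b (2+m+t) = 0 :=
    fun t ht => by
      rw [pe_B_A (v := 2+m+t) (by omega) ha, zero_mul, zero_mul]
  rw [e0, e1, Finset.sum_congr rfl eA, Finset.sum_congr rfl eB, Finset.sum_const_zero,
    add_zero, icc_to_range]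
  congr 1
  refine Finset.sum_congr rfl fun t ht => ?_
  have htm := mem_range.1 ht
  rw [show m+1-(1+t) = m-t by omega]

lemma dent_BB {m : ℕ} (L : ℕ → ℝ) {a b : ℕ} (ha : ¬ a ≤ m) (hb : ¬ b ≤ m) :
    dent m L a b = 1/(2*(m:ℝ)+2) + L 2/(2*(m:ℝ)+2)
      + ∑ t ∈ Icc 1 m, L (be (m+1-t)) * (ch t (a-m-1) * ch t (b-m-1)) := by
  unfold dent
  rw [colsplit]
  have e0 : pe m a 0 * mu m L 0 * pe m b 0 = 1/(2*(m:ℝ)+2) := by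
    rw [pe_zero, pe_zero, mu_zero, mul_one, c_sq]
  have e1 : pe m a 1 * mu m L 1 * pe m b 1 = L 2/(2*(m:ℝ)+2) := by
    rw [pe_one_B ha, pe_one_B hb, mu_one,
      show -(cc m) * L 2 * -(cc m) = L 2 * (cc m * cc m) by ring, c_sq, mul_one_div]
  have eA : ∀ t ∈ range m, pe m a (2+t) * mu m L (2+t) * pe m b (2+t) = 0 :=
    fun t ht => by
      have htm := mem_range.1 ht
      rw [pe_A_B (v := 2+t) (by omega) (by omega) ha, zero_mul, zero_mul]
  have eB : ∀ t ∈ range m, pe m a (2+m+t) * mu m L (2+m+t) * pe m b (2+m+t)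
      = L (be (m-t)) * (ch (1+t) (a-m-1) * ch (1+t) (b-m-1)) := fun t ht => by
    have htm := mem_range.1 ht
    rw [pe_B_B (v := 2+m+t) (by omega) ha, pe_B_B (v := 2+m+t) (by omega) hb, mu_B L htm,
      show 2+m+t-m-1 = 1+t by omega]
    ring
  rw [e0, e1, Finset.sum_congr rfl eA, Finset.sum_congr rfl eB, Finset.sum_const_zero,
    add_zero, icc_to_range]
  congr 1
  refine Finset.sum_congr rfl fun t ht => ?_
  have htm := mem_range.1 ht
  rw [show m+1-(1+t) = m-t by omega]

lemma dent_AB {m : ℕ} (L : ℕ → ℝ) {a b : ℕ} (ha : a ≤ m) (hb : ¬ b ≤ m) :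
    dent m L a b = 1/(2*(m:ℝ)+2) - L 2/(2*(m:ℝ)+2) := by
  unfold dent
  rw [colsplit]
  have e0 : pe m a 0 * mu m L 0 * pe m b 0 = 1/(2*(m:ℝ)+2) := by
    rw [pe_zero, pe_zero, mu_zero, mul_one, c_sq]
  have e1 : pe m a 1 * mu m L 1 * pe m b 1 = -(L 2/(2*(m:ℝ)+2)) := by
    rw [pe_one_A ha, pe_one_B hb, mu_one,
      show cc m * L 2 * -(cc m) = -(L 2 * (cc m * cc m)) by ring, c_sq, mul_one_div]
  have eA : ∀ t ∈ range m, pe m a (2+t) * mu m L (2+t) * pe m b (2+t) = 0 :=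
    fun t ht => by
      have htm := mem_range.1 ht
      rw [pe_A_B (v := 2+t) (by omega) (by omega) hb, mul_zero]
  have eB : ∀ t ∈ range m, pe m a (2+m+t) * mu m L (2+m+t) * pe m b (2+m+t) = 0 :=
    fun t ht => by
      rw [pe_B_A (v := 2+m+t) (by omega) ha, zero_mul, zero_mul]
  rw [e0, e1, Finset.sum_congr rfl eA, Finset.sum_congr rfl eB, Finset.sum_const_zero]
  ring

/-! ### evaluating the chain sums -/

lemma chain_eval_offdiag {m a b : ℕ} (hab : a < b) (hbm : b ≤ m) (ν : ℕ → ℝ) :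
    ∑ t ∈ Icc 1 m, ν t * (ch t a * ch t b)
      = ∑ t ∈ Icc (b+1) m, ν t / ((t:ℝ)*(t+1)) - ν b/((b:ℝ)+1) := by
  have hb1 : 1 ≤ b := by omega
  rw [sum_split b m hbm]
  have h1 : ∑ t ∈ Icc 1 b, ν t * (ch t a * ch t b) = -(ν b/((b:ℝ)+1)) := by
    rw [Finset.sum_eq_single b
      (fun t htmem htb => by
        have hmm := mem_Icc.1 htmem
        rcases Nat.lt_or_ge t b with h | h
        · rw [show ch t b = 0 from ch_gt h, mul_zero, mul_zero]
        · exact absurd (by omega : t = b) htb)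
      (fun hmem => absurd (Finset.mem_Icc.mpr ⟨hb1, le_refl b⟩) hmem)]
    have hbp : (1:ℝ) ≤ (b:ℝ) := by exact_mod_cast hb1
    have hs := st_sq b
    have hsp := st_pos hb1
    have key : ch b a * ch b b = -(1/((b:ℝ)+1)) := by
      rw [ch_lt hab, ch_eq, mul_neg, div_mul_div_comm, one_mul, hs]
      rw [neg_inj, div_eq_div_iff (by positivity) (by positivity)]
      ring
    rw [key]
    ring
  have h2 : ∑ t ∈ Icc (b+1) m, ν t * (ch t a * ch t b)
      = ∑ t ∈ Icc (b+1) m, ν t / ((t:ℝ)*(t+1)) := by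
    refine Finset.sum_congr rfl fun t ht => ?_
    have htt := mem_Icc.1 ht
    have h1t : 1 ≤ t := by omega
    have hs := st_sq t
    rw [ch_lt (show a < t by omega), ch_lt (show b < t by omega), div_mul_div_comm,
      one_mul, hs, mul_one_div]
  rw [h1, h2]
  ring

lemma chain_eval_diag {m a : ℕ} (ha1 : 1 ≤ a) (ham : a ≤ m) (ν : ℕ → ℝ) :
    ∑ t ∈ Icc 1 m, ν t * (ch t a * ch t a)
      = ∑ t ∈ Icc (a+1) m, ν t / ((t:ℝ)*(t+1)) + ν a * ((a:ℝ)/((a:ℝ)+1)) := by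
  rw [sum_split a m ham]
  have h1 : ∑ t ∈ Icc 1 a, ν t * (ch t a * ch t a) = ν a * ((a:ℝ)/((a:ℝ)+1)) := by
    rw [Finset.sum_eq_single a
      (fun t htmem hta => by
        have hmm := mem_Icc.1 htmem
        rcases Nat.lt_or_ge t a with h | h
        · rw [show ch t a = 0 from ch_gt h, mul_zero, mul_zero]
        · exact absurd (by omega : t = a) hta)
      (fun hmem => absurd (Finset.mem_Icc.mpr ⟨ha1, le_refl a⟩) hmem)]
    have hap : (1:ℝ) ≤ (a:ℝ) := by exact_mod_cast ha1
    have hs := st_sq a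
    have hsp := st_pos ha1
    have key : ch a a * ch a a = (a:ℝ)/((a:ℝ)+1) := by
      rw [ch_eq, neg_mul_neg, div_mul_div_comm, hs]
      rw [div_eq_div_iff (by positivity) (by positivity)]
      ring
    rw [key]
  have h2 : ∑ t ∈ Icc (a+1) m, ν t * (ch t a * ch t a)
      = ∑ t ∈ Icc (a+1) m, ν t / ((t:ℝ)*(t+1)) := by
    refine Finset.sum_congr rfl fun t ht => ?_
    have htt := mem_Icc.1 ht
    have hs := st_sq t
    rw [ch_lt (show a < t by omega), div_mul_div_comm, one_mul, hs, mul_one_div]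
  rw [h1, h2]
  ring

lemma chain_eval_diag0 {m : ℕ} (ν : ℕ → ℝ) :
    ∑ t ∈ Icc 1 m, ν t * (ch t 0 * ch t 0) = ∑ t ∈ Icc 1 m, ν t / ((t:ℝ)*(t+1)) := by
  refine Finset.sum_congr rfl fun t ht => ?_
  have htt := mem_Icc.1 ht
  have hs := st_sq t
  rw [ch_lt (show 0 < t by omega), div_mul_div_comm, one_mul, hs, mul_one_div]




/-! ### nonnegativity -/

lemma nonneg_chain (m : ℕ) (ν : ℕ → ℝ) (l2 : ℝ) (hl2 : l2 ≤ 1)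
    (hmono : ∀ s t, 1 ≤ s → s ≤ t → t ≤ m → ν s ≤ ν t) (htop : ν m ≤ l2)
    (hS : 0 ≤ 1/(2*(m:ℝ)+2) + l2/(2*(m:ℝ)+2) + ∑ t ∈ Icc 1 m, ν t / ((t:ℝ)*(t+1)))
    (a b : ℕ) (hb : b ≤ m) (hab : a ≤ b) :
    0 ≤ 1/(2*(m:ℝ)+2) + l2/(2*(m:ℝ)+2) + ∑ t ∈ Icc 1 m, ν t * (ch t a * ch t b) := by
  rcases eq_or_lt_of_le hab with rfl | h
  · by_cases ha0 : a = 0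
    · subst ha0
      rw [chain_eval_diag0]
      exact hS
    · rw [chain_eval_diag (by omega) hb]
      exact key_diag m a (by omega) hb ν l2 hmono hS
  · rw [chain_eval_offdiag h hb]
    exact key_offdiag m b (by omega) hb ν l2 hl2 hmono htop hS

lemma dent_nonneg (m : ℕ) (L : ℕ → ℝ) (hub : L 2 ≤ 1)
    (hSA : 0 ≤ 1/(2*(m:ℝ)+2) + L 2/(2*(m:ℝ)+2)
        + ∑ t ∈ Icc 1 m, L (al (m+1-t)) / ((t:ℝ)*(t+1)))
    (hSB : 0 ≤ 1/(2*(m:ℝ)+2) + L 2/(2*(m:ℝ)+2)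
        + ∑ t ∈ Icc 1 m, L (be (m+1-t)) / ((t:ℝ)*(t+1)))
    (hmonoA : ∀ s t, 1 ≤ s → s ≤ t → t ≤ m → L (al (m+1-s)) ≤ L (al (m+1-t)))
    (hmonoB : ∀ s t, 1 ≤ s → s ≤ t → t ≤ m → L (be (m+1-s)) ≤ L (be (m+1-t)))
    (htopA : L (al (m+1-m)) ≤ L 2) (htopB : L (be (m+1-m)) ≤ L 2) :
    ∀ x y, x < 2*m+2 → y < 2*m+2 → 0 ≤ dent m L x y := by
  have hAB : ∀ x y, x ≤ m → ¬ y ≤ m → 0 ≤ dent m L x y := by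
    intro x y hx hy
    rw [dent_AB L hx hy, div_sub_div_same]
    apply div_nonneg (by linarith) (by positivity)
  have hAA : ∀ x y, x ≤ m → y ≤ m → x ≤ y → 0 ≤ dent m L x y := by
    intro x y hx hy hxy
    rw [dent_AA L hx hy]
    exact nonneg_chain m (fun t => L (al (m+1-t))) (L 2) hub hmonoA htopA hSA x y hy hxy
  have hBB : ∀ x y, ¬ x ≤ m → ¬ y ≤ m → y < 2*m+2 → x ≤ y → 0 ≤ dent m L x y := by
    intro x y hx hy hylt hxy
    rw [dent_BB L hx hy]
    exact nonneg_chain m (fun t => L (be (m+1-t))) (L 2) hub hmonoB htopB hSB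
      (x-m-1) (y-m-1) (by omega) (by omega)
  intro x y hx hy
  by_cases hxm : x ≤ m
  · by_cases hym : y ≤ m
    · rcases le_total x y with h | h
      · exact hAA x y hxm hym h
      · rw [dent_symm]; exact hAA y x hym hxm h
    · exact hAB x y hxm hym
  · by_cases hym : y ≤ m
    · rw [dent_symm]; exact hAB y x hym hxm
    · rcases le_total x y with h | h
      · exact hBB x y hxm hym hy h
      · rw [dent_symm]; exact hBB y x hym hxm hx h

/-! ### row sums -/

lemma colsum (m : ℕ) (hm : 1 ≤ m) (v : ℕ) (hv : v < 2*m+2) :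
    ∑ y ∈ range (2*m+2), pe m y v
      = if v = 0 then Real.sqrt (2*(m:ℝ)+2) else 0 := by
  have hg := gram m hm 0 v (by omega) hv
  have he : ∑ i ∈ range (2*m+2), pe m i 0 * pe m i v
      = cc m * ∑ i ∈ range (2*m+2), pe m i v := by
    rw [Finset.mul_sum]
    exact Finset.sum_congr rfl fun i _ => by rw [pe_zero]
  rw [he] at hg
  have hsp : (0:ℝ) < Real.sqrt (2*(m:ℝ)+2) := Real.sqrt_pos.2 (by positivity)
  have hccv : cc m = 1/Real.sqrt (2*(m:ℝ)+2) := rfl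
  have hcc0 : cc m ≠ 0 := by rw [hccv]; positivity
  by_cases h0 : v = 0
  · subst h0
    rw [if_pos rfl] at hg ⊢
    rw [hccv, one_div, inv_mul_eq_iff_eq_mul₀ (ne_of_gt hsp), mul_one] at hg
    linarith [hg]
  · rw [if_neg (fun hh => h0 hh.symm)] at hg
    rw [if_neg h0]
    exact (mul_eq_zero.mp hg).resolve_left hcc0

lemma rowsum (m : ℕ) (hm : 1 ≤ m) (L : ℕ → ℝ) (x : ℕ) (hx : x < 2*m+2) :
    ∑ y ∈ range (2*m+2), dent m L x y = 1 := by
  unfold dent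
  rw [Finset.sum_comm]
  have he : ∀ v ∈ range (2*m+2), ∑ y ∈ range (2*m+2), pe m x v * mu m L v * pe m y v
      = pe m x v * mu m L v * (if v = 0 then Real.sqrt (2*(m:ℝ)+2) else 0) := by
    intro v hv
    rw [← Finset.mul_sum, colsum m hm v (mem_range.1 hv)]
  rw [Finset.sum_congr rfl he, Finset.sum_eq_single 0
    (fun v _ hv0 => by rw [if_neg hv0, mul_zero])
    (fun hmem => absurd (mem_range.2 (by omega)) hmem)]
  rw [if_pos rfl, pe_zero, mu_zero, mul_one]
  have hsp : (0:ℝ) < Real.sqrt (2*(m:ℝ)+2) := Real.sqrt_pos.2 (by positivity)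
  have hccv : cc m = 1/Real.sqrt (2*(m:ℝ)+2) := rfl
  rw [hccv, one_div, inv_mul_cancel₀ (ne_of_gt hsp)]




lemma charpoly_conj {N : ℕ} (P A : Matrix (Fin N) (Fin N) ℝ) (h1 : P * Pᵀ = 1) :
    (P * A * Pᵀ).charpoly = A.charpoly := by
  have hC1 : (P.map (C : ℝ →+* ℝ[X])) * (Pᵀ.map C) = 1 := by
    rw [← Matrix.map_mul, h1, Matrix.map_one _ (map_zero C) (map_one C)]
  have hm : charmatrix (P * A * Pᵀ) = (P.map C) * charmatrix A * (Pᵀ.map C) := by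
    unfold charmatrix
    rw [Matrix.mul_sub, Matrix.sub_mul]
    congr 1
    · -- scalar part
      have hcomm := (Matrix.scalar_commute (X : ℝ[X]) (fun r => Commute.all _ _)
        (Pᵀ.map (C : ℝ →+* ℝ[X]))).eq
      rw [Matrix.mul_assoc, hcomm, ← Matrix.mul_assoc, hC1, Matrix.one_mul]
    · simp only [RingHom.mapMatrix_apply]
      rw [Matrix.map_mul, Matrix.map_mul]
  unfold Matrix.charpoly
  rw [hm, Matrix.det_mul, Matrix.det_mul]
  have hd : (P.map (C : ℝ →+* ℝ[X])).det * (Pᵀ.map C).det = 1 := by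
    rw [← Matrix.det_mul, hC1, Matrix.det_one]
  calc (P.map C).det * (charmatrix A).det * (Pᵀ.map C).det
      = (charmatrix A).det * ((P.map C).det * (Pᵀ.map C).det) := by ring
    _ = (charmatrix A).det := by rw [hd, mul_one]

lemma charpoly_diag {N : ℕ} (d : Fin N → ℝ) :
    (Matrix.diagonal d).charpoly = ∏ i, (X - C (d i)) := by
  have : charmatrix (Matrix.diagonal d) = Matrix.diagonal (fun i => (X : ℝ[X]) - C (d i)) := by
    refine Matrix.ext fun i j => ?_
    by_cases h : i = j
    · subst h
      simp [charmatrix_apply_eq]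
    · rw [charmatrix_apply_ne _ _ _ h, Matrix.diagonal_apply_ne _ h,
        Matrix.diagonal_apply_ne _ h, map_zero, neg_zero]
  unfold Matrix.charpoly
  rw [this, Matrix.det_diagonal]

lemma pairprod (f : ℕ → Polynomial ℝ) :
    ∀ m, ∏ j ∈ Icc 1 m, (f (2*j+1) * f (2*j+2)) = ∏ j ∈ Icc 3 (2*m+2), f j := by
  intro m
  induction m with
  | zero =>
    rw [Icc_eq_empty (by omega), Icc_eq_empty (by omega), prod_empty, prod_empty]
  | succ m ih =>
    rw [Finset.prod_Icc_succ_top (show 1 ≤ m+1 by omega), ih,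
      show 2*(m+1)+2 = (2*m+3)+1 by ring,
      Finset.prod_Icc_succ_top (show 3 ≤ 2*m+3+1 by omega),
      show 2*m+3 = (2*m+2)+1 by ring,
      Finset.prod_Icc_succ_top (show 3 ≤ 2*m+2+1 by omega),
      show 2*(m+1)+1 = 2*m+2+1 by ring]
    ring




lemma prodsplit (m : ℕ) (F : ℕ → Polynomial ℝ) :
    ∏ v ∈ range (2*m+2), F v
      = F 0 * F 1 * (∏ t ∈ range m, F (2+t)) * ∏ t ∈ range m, F (2+m+t) := by
  rw [show 2*m+2 = 2+m+m by omega, Finset.prod_range_add, Finset.prod_range_add,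
    Finset.prod_range_succ, Finset.prod_range_one]

lemma prod_icc_to_range (m : ℕ) (f : ℕ → Polynomial ℝ) :
    ∏ t ∈ Icc 1 m, f t = ∏ t ∈ range m, f (1+t) := by
  rw [← Finset.Ico_add_one_right_eq_Icc, Finset.prod_Ico_eq_prod_range, show m+1-1 = m from rfl]

lemma prod_mu (m : ℕ) (hm : 1 ≤ m) (L : ℕ → ℝ) :
    ∏ v ∈ range (2*m+2), (X - C (mu m L v))
      = (X - C 1) * ∏ j ∈ Icc 2 (2*m+2), (X - C (L j)) := by
  rw [prodsplit, mu_zero, mu_one]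
  have eA : ∀ t ∈ range m, (X - C (mu m L (2+t))) = (X - C (L (al (m-t)))) :=
    fun t ht => by rw [mu_A L (mem_range.1 ht)]
  have eB : ∀ t ∈ range m, (X - C (mu m L (2+m+t))) = (X - C (L (be (m-t)))) :=
    fun t ht => by rw [mu_B L (mem_range.1 ht)]
  rw [Finset.prod_congr rfl eA, Finset.prod_congr rfl eB]
  have ra : ∏ t ∈ range m, (X - C (L (al (m-t)))) = ∏ j ∈ Icc 1 m, (X - C (L (al j))) := by
    rw [prod_icc_to_range]
    conv_rhs => rw [← Finset.prod_range_reflect (fun t => (X - C (L (al (1+t))))) m]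
    refine Finset.prod_congr rfl fun t ht => ?_
    have htm := mem_range.1 ht
    rw [show 1+(m-1-t) = m-t by omega]
  have rb : ∏ t ∈ range m, (X - C (L (be (m-t)))) = ∏ j ∈ Icc 1 m, (X - C (L (be j))) := by
    rw [prod_icc_to_range]
    conv_rhs => rw [← Finset.prod_range_reflect (fun t => (X - C (L (be (1+t))))) m]
    refine Finset.prod_congr rfl fun t ht => ?_
    have htm := mem_range.1 ht
    rw [show 1+(m-1-t) = m-t by omega]
  rw [ra, rb]
  have hmul : (∏ j ∈ Icc 1 m, (X - C (L (al j)))) * (∏ j ∈ Icc 1 m, (X - C (L (be j))))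
      = ∏ j ∈ Icc 1 m, ((X - C (L (2*j+1))) * (X - C (L (2*j+2)))) := by
    rw [← Finset.prod_mul_distrib]
    refine Finset.prod_congr rfl fun j hj => ?_
    unfold al be
    by_cases h1 : j = 1
    · subst h1; norm_num
    · rw [if_neg h1]
      by_cases h2 : Odd j
      · rw [if_pos h2, if_pos h2]
      · rw [if_neg h2, if_neg h2]; ring
  have hpair := pairprod (fun j => X - C (L j)) m
  have hbot : (X - C (L 2)) * ∏ j ∈ Icc 3 (2*m+2), (X - C (L j))
      = ∏ j ∈ Icc 2 (2*m+2), (X - C (L j)) := by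
    conv_rhs => rw [← Finset.Ico_add_one_right_eq_Icc]
    rw [Finset.prod_eq_prod_Ico_succ_bot (show 2 < (2*m+2)+1 by omega),
      show (2:ℕ)+1 = 3 from rfl, Finset.Ico_add_one_right_eq_Icc]
  calc (X - C 1) * (X - C (L 2)) * (∏ j ∈ Icc 1 m, (X - C (L (al j))))
        * (∏ j ∈ Icc 1 m, (X - C (L (be j))))
      = (X - C 1) * ((X - C (L 2)) * ((∏ j ∈ Icc 1 m, (X - C (L (al j))))
        * (∏ j ∈ Icc 1 m, (X - C (L (be j)))))) := by ring
    _ = (X - C 1) * ((X - C (L 2)) * ∏ j ∈ Icc 3 (2*m+2), (X - C (L j))) := by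
        rw [hmul, hpair]
    _ = (X - C 1) * ∏ j ∈ Icc 2 (2*m+2), (X - C (L j)) := by rw [hbot]

lemma reflect_sum (m : ℕ) (g : ℕ → ℝ) :
    ∑ j ∈ Icc 1 m, g j / (((m-j+1)*(m-j+2) : ℕ) : ℝ)
      = ∑ t ∈ Icc 1 m, g (m+1-t) / ((t:ℝ)*((t:ℝ)+1)) := by
  rw [icc_to_range, icc_to_range]
  conv_lhs => rw [← Finset.sum_range_reflect]
  refine Finset.sum_congr rfl fun t ht => ?_
  have htm := mem_range.1 ht
  rw [show 1+(m-1-t) = m-t by omega, show m-(m-t)+1 = t+1 by omega,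
    show m-(m-t)+2 = t+2 by omega, show m+1-(1+t) = m-t by omega]
  push_cast
  ring_nf
end SDIEP

/-- Case `n = 4k+2`, `m = 2k`: with `α₁ = 3` and `α_j = 2j+1` for odd `j > 1`, `2j+2` for
even `j` (the increasing enumeration `3, 6, 7, 10, 11, …, n-4, n-3, n`), and `β_j = 2j+2`
for `j` odd, `2j+1` for `j` even (the increasing enumeration `4, 5, 8, 9, …, n-2, n-1`),
if both `1/n + ((n-m-1)/(n(m+1)))λ₂ + ∑_{j=1}^{m} λ_{α_j}/((m-j+1)(m-j+2)) ≥ 0` and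
`1/n + ((n-m-1)/(n(m+1)))λ₂ + ∑_{j=1}^{m} λ_{β_j}/((m-j+1)(m-j+2)) ≥ 0`, then
`1, λ₂, …, λₙ` is the spectrum of an `n × n` symmetric doubly stochastic matrix. -/
theorem sdiep_4k2 (k n m : ℕ) (hk : 1 ≤ k) (hn : n = 4 * k + 2) (hm : m = 2 * k)
    (L : ℕ → ℝ) (hub : L 2 ≤ 1)
    (hdec : ∀ j, 2 ≤ j → j < n → L (j + 1) ≤ L j)
    (hlb : -1 ≤ L n)
    (htr : 0 ≤ 1 + ∑ j ∈ Finset.Icc 2 n, L j)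
    (hcond1 : 0 ≤ 1 / (n : ℝ) + ((n : ℝ) - (m : ℝ) - 1) / ((n : ℝ) * ((m : ℝ) + 1)) * L 2 +
        ∑ j ∈ Finset.Icc 1 m,
          L (if j = 1 then 3 else if Odd j then 2 * j + 1 else 2 * j + 2) /
            (((m - j + 1) * (m - j + 2) : ℕ) : ℝ))
    (hcond2 : 0 ≤ 1 / (n : ℝ) + ((n : ℝ) - (m : ℝ) - 1) / ((n : ℝ) * ((m : ℝ) + 1)) * L 2 +
        ∑ j ∈ Finset.Icc 1 m, L (if Odd j then 2 * j + 2 else 2 * j + 1) /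
          (((m - j + 1) * (m - j + 2) : ℕ) : ℝ)) :
    ∃ D : Matrix (Fin n) (Fin n) ℝ, D.IsSymm ∧ DoublyStochastic D ∧
      D.charpoly = (X - C 1) * ∏ j ∈ Finset.Icc 2 n, (X - C (L j)) := by
  classical
  have hn2 : n = 2 * m + 2 := by omega
  subst hn2
  have hm1 : 1 ≤ m := by omega
  -- the orthogonal matrix and the diagonal of eigenvalues
  set P : Matrix (Fin (2*m+2)) (Fin (2*m+2)) ℝ :=
    Matrix.of (fun i v : Fin (2*m+2) => SDIEP.pe m i v) with hPdef
  set μf : Fin (2*m+2) → ℝ := fun v => SDIEP.mu m L v with hμdef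
  have hPtP : Pᵀ * P = 1 := by
    refine Matrix.ext fun u v => ?_
    rw [Matrix.mul_apply]
    have h1 : ∀ i : Fin (2*m+2), Pᵀ u i * P i v = SDIEP.pe m i u * SDIEP.pe m i v :=
      fun i => by rw [Matrix.transpose_apply]; rfl
    rw [Finset.sum_congr rfl fun i _ => h1 i,
      Fin.sum_univ_eq_sum_range (fun i => SDIEP.pe m i u * SDIEP.pe m i v) (2*m+2),
      SDIEP.gram m hm1 u v u.isLt v.isLt]
    by_cases h : u = v
    · subst h; rw [if_pos rfl, Matrix.one_apply_eq]
    · rw [if_neg (fun hh => h (Fin.val_injective hh)), Matrix.one_apply_ne h]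
  have hPPt : P * Pᵀ = 1 := mul_eq_one_comm.mp hPtP
  refine ⟨P * Matrix.diagonal μf * Pᵀ, ?_, ?_, ?_⟩
  · -- symmetric
    show (P * Matrix.diagonal μf * Pᵀ)ᵀ = P * Matrix.diagonal μf * Pᵀ
    rw [Matrix.transpose_mul, Matrix.transpose_mul, Matrix.transpose_transpose,
      Matrix.diagonal_transpose, Matrix.mul_assoc]
  · -- doubly stochastic
    have hent : ∀ x y : Fin (2*m+2),
        (P * Matrix.diagonal μf * Pᵀ) x y = SDIEP.dent m L x y := by
      intro x y
      rw [Matrix.mul_apply]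
      have h1 : ∀ v : Fin (2*m+2), (P * Matrix.diagonal μf) x v * Pᵀ v y
          = SDIEP.pe m x v * SDIEP.mu m L v * SDIEP.pe m y v := fun v => by
        rw [Matrix.mul_diagonal, Matrix.transpose_apply]; rfl
      rw [Finset.sum_congr rfl fun v _ => h1 v,
        Fin.sum_univ_eq_sum_range
          (fun v => SDIEP.pe m x v * SDIEP.mu m L v * SDIEP.pe m y v) (2*m+2)]
      rfl
    -- antitonicity consequences
    have hLa := SDIEP.L_anti hdec
    have hmonoA : ∀ s t, 1 ≤ s → s ≤ t → t ≤ m →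
        L (SDIEP.al (m+1-s)) ≤ L (SDIEP.al (m+1-t)) := by
      intro s t hs hst htm
      have h1 : 1 ≤ m+1-t := by omega
      have h2 : 1 ≤ m+1-s := by omega
      have hb1 := SDIEP.al_bounds h1
      have hb2 := SDIEP.al_bounds h2
      exact hLa _ _ (by omega) (SDIEP.al_mono h1 (by omega)) (by omega)
    have hmonoB : ∀ s t, 1 ≤ s → s ≤ t → t ≤ m →
        L (SDIEP.be (m+1-s)) ≤ L (SDIEP.be (m+1-t)) := by
      intro s t hs hst htm
      have hb1 := SDIEP.be_bounds (m+1-t)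
      have hb2 := SDIEP.be_bounds (m+1-s)
      exact hLa _ _ (by omega) (SDIEP.be_mono (by omega)) (by omega)
    have htopA : L (SDIEP.al (m+1-m)) ≤ L 2 := by
      rw [show m+1-m = 1 by omega, show SDIEP.al 1 = 3 from rfl]
      exact hLa 2 3 (le_refl 2) (by omega) (by omega)
    have htopB : L (SDIEP.be (m+1-m)) ≤ L 2 := by
      rw [show m+1-m = 1 by omega, show SDIEP.be 1 = 4 from rfl]
      exact hLa 2 4 (le_refl 2) (by omega) (by omega)
    -- rewrite the hypotheses hcond1/hcond2
    have hcast : ((2*m+2 : ℕ) : ℝ) = 2*(m:ℝ)+2 := by push_cast; ring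
    have hcoef : ((2*m+2 : ℕ) : ℝ) - (m:ℝ) - 1 = (m:ℝ) + 1 := by push_cast; ring
    have hcoef2 : ∀ z : ℝ, ((m:ℝ)+1) / ((2*(m:ℝ)+2) * ((m:ℝ)+1)) * z = z / (2*(m:ℝ)+2) := by
      intro z
      have h1 : (0:ℝ) < (m:ℝ)+1 := by positivity
      have h2 : (0:ℝ) < 2*(m:ℝ)+2 := by positivity
      field_simp
    have hSA : 0 ≤ 1/(2*(m:ℝ)+2) + L 2/(2*(m:ℝ)+2)
        + ∑ t ∈ Finset.Icc 1 m, L (SDIEP.al (m+1-t)) / ((t:ℝ)*((t:ℝ)+1)) := by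
      have h0 : 0 ≤ 1 / ((2*m+2 : ℕ) : ℝ)
          + (((2*m+2:ℕ):ℝ) - (m:ℝ) - 1) / (((2*m+2:ℕ):ℝ) * ((m:ℝ) + 1)) * L 2 +
          ∑ j ∈ Finset.Icc 1 m, L (SDIEP.al j) / (((m - j + 1) * (m - j + 2) : ℕ) : ℝ) :=
        hcond1
      rw [hcoef, hcast, hcoef2, SDIEP.reflect_sum m (fun j => L (SDIEP.al j))] at h0
      exact h0
    have hSB : 0 ≤ 1/(2*(m:ℝ)+2) + L 2/(2*(m:ℝ)+2)
        + ∑ t ∈ Finset.Icc 1 m, L (SDIEP.be (m+1-t)) / ((t:ℝ)*((t:ℝ)+1)) := by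
      have h0 : 0 ≤ 1 / ((2*m+2 : ℕ) : ℝ)
          + (((2*m+2:ℕ):ℝ) - (m:ℝ) - 1) / (((2*m+2:ℕ):ℝ) * ((m:ℝ) + 1)) * L 2 +
          ∑ j ∈ Finset.Icc 1 m, L (SDIEP.be j) / (((m - j + 1) * (m - j + 2) : ℕ) : ℝ) :=
        hcond2
      rw [hcoef, hcast, hcoef2, SDIEP.reflect_sum m (fun j => L (SDIEP.be j))] at h0
      exact h0
    have hnn := SDIEP.dent_nonneg m L hub hSA hSB hmonoA hmonoB htopA htopB
    refine ⟨fun i j => by rw [hent i j]; exact hnn i j i.isLt j.isLt, ?_, ?_⟩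
    · intro i
      rw [Finset.sum_congr rfl fun j _ => hent i j,
        Fin.sum_univ_eq_sum_range (fun y => SDIEP.dent m L i y) (2*m+2)]
      exact SDIEP.rowsum m hm1 L i i.isLt
    · intro j
      have h1 : ∀ i : Fin (2*m+2), (P * Matrix.diagonal μf * Pᵀ) i j
          = SDIEP.dent m L j i := fun i => by rw [hent i j, SDIEP.dent_symm]
      rw [Finset.sum_congr rfl fun i _ => h1 i,
        Fin.sum_univ_eq_sum_range (fun y => SDIEP.dent m L j y) (2*m+2)]
      exact SDIEP.rowsum m hm1 L j j.isLt
  · -- characteristic polynomial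
    rw [SDIEP.charpoly_conj P _ hPPt, SDIEP.charpoly_diag μf]
    rw [Fin.prod_univ_eq_prod_range (fun v => X - C (SDIEP.mu m L v)) (2*m+2)]
    exact SDIEP.prod_mu m hm1 L
end

section
/- Let 1 ≥ λ₂ ≥ λ₃ ≥ λ₄ ≥ −1 be real numbers with 1 + λ₂ + λ₃ + λ₄ ≥ 0. If 1 − λ₂ − λ₃ + λ₄ ≥ 0, then there exists a symmetric 4×4 doubly stochastic matrix whose eigenvalues, counted with algebraic multiplicity, are 1, λ₂, λ₃, λ₄. -/
set_option maxHeartbeats 1000000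


open Matrix Polynomial

lemma charpoly_conj_aux {n : Type*} [Fintype n] [DecidableEq n]
    (P Q M : Matrix n n ℝ) (hPQ : P * Q = 1) :
    (P * M * Q).charpoly = M.charpoly := by
  unfold Matrix.charpoly
  have hmap : (C : ℝ →+* ℝ[X]).mapMatrix P * (C : ℝ →+* ℝ[X]).mapMatrix Q = 1 := by
    rw [← RingHom.map_mul, hPQ, RingHom.map_one]
  have h : charmatrix (P * M * Q) =
      (C : ℝ →+* ℝ[X]).mapMatrix P * charmatrix M * (C : ℝ →+* ℝ[X]).mapMatrix Q := by
    unfold charmatrix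
    rw [mul_sub, sub_mul, RingHom.map_mul, RingHom.map_mul]
    congr 1
    have hc : (C : ℝ →+* ℝ[X]).mapMatrix P * Matrix.scalar n (X : ℝ[X]) =
        Matrix.scalar n (X : ℝ[X]) * (C : ℝ →+* ℝ[X]).mapMatrix P :=
      (Matrix.scalar_commute (X : ℝ[X]) (fun r => Commute.all _ _) _).symm
    rw [hc, mul_assoc, hmap, mul_one]
  rw [h, det_mul, det_mul]
  have hone : ((C : ℝ →+* ℝ[X]).mapMatrix P).det * ((C : ℝ →+* ℝ[X]).mapMatrix Q).det = 1 := by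
    rw [← det_mul, hmap, det_one]
  calc ((C : ℝ →+* ℝ[X]).mapMatrix P).det * (charmatrix M).det *
        ((C : ℝ →+* ℝ[X]).mapMatrix Q).det
      = (charmatrix M).det * (((C : ℝ →+* ℝ[X]).mapMatrix P).det *
        ((C : ℝ →+* ℝ[X]).mapMatrix Q).det) := by ring
    _ = (charmatrix M).det := by rw [hone, mul_one]

lemma hadamard_inv :
    (!![1,1,1,1;1,-1,1,-1;1,1,-1,-1;1,-1,-1,1] : Matrix (Fin 4) (Fin 4) ℝ) *
      ((4⁻¹ : ℝ) • !![1,1,1,1;1,-1,1,-1;1,1,-1,-1;1,-1,-1,1]) = 1 := by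
  ext i j
  fin_cases i <;> fin_cases j <;>
    simp [Matrix.mul_apply, Fin.sum_univ_four, Matrix.one_apply, Matrix.vecHead, Matrix.vecTail] <;> norm_num

lemma conj_eq (l2 l3 l4 : ℝ) :
    (!![(1+l2+l3+l4)/4, (1-l2+l3-l4)/4, (1+l2-l3-l4)/4, (1-l2-l3+l4)/4;
        (1-l2+l3-l4)/4, (1+l2+l3+l4)/4, (1-l2-l3+l4)/4, (1+l2-l3-l4)/4;
        (1+l2-l3-l4)/4, (1-l2-l3+l4)/4, (1+l2+l3+l4)/4, (1-l2+l3-l4)/4;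
        (1-l2-l3+l4)/4, (1+l2-l3-l4)/4, (1-l2+l3-l4)/4, (1+l2+l3+l4)/4] :
        Matrix (Fin 4) (Fin 4) ℝ) =
    !![1,1,1,1;1,-1,1,-1;1,1,-1,-1;1,-1,-1,1] *
      !![1,0,0,0; 0,l2,0,0; 0,0,l3,0; 0,0,0,l4] *
      ((4⁻¹ : ℝ) • !![1,1,1,1;1,-1,1,-1;1,1,-1,-1;1,-1,-1,1]) := by
  ext i j
  fin_cases i <;> fin_cases j <;>
    simp [Matrix.mul_apply, Fin.sum_univ_four, Matrix.smul_apply, smul_eq_mul, Matrix.vecHead, Matrix.vecTail] <;> ring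

lemma diag_charpoly (l2 l3 l4 : ℝ) :
    (!![1,0,0,0; 0,l2,0,0; 0,0,l3,0; 0,0,0,l4] : Matrix (Fin 4) (Fin 4) ℝ).charpoly =
      (X - C 1) * (X - C l2) * (X - C l3) * (X - C l4) := by
  have htri : (!![1,0,0,0; 0,l2,0,0; 0,0,l3,0; 0,0,0,l4] :
      Matrix (Fin 4) (Fin 4) ℝ).BlockTriangular id := by
    intro i j hij
    fin_cases i <;> fin_cases j <;> first | (exact absurd hij (by decide)) | simp [Matrix.vecHead, Matrix.vecTail]
  rw [Matrix.charpoly_of_upperTriangular _ htri, Fin.prod_univ_four]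
  norm_num
  rfl

/-- If `1 ≥ λ₂ ≥ λ₃ ≥ λ₄ ≥ -1`, `1 + λ₂ + λ₃ + λ₄ ≥ 0` and `1 - λ₂ - λ₃ + λ₄ ≥ 0`, then
there is a symmetric `4 × 4` doubly stochastic matrix with eigenvalues `1, λ₂, λ₃, λ₄`. -/
theorem sdiep_four (l2 l3 l4 : ℝ) (h2 : l2 ≤ 1) (h3 : l3 ≤ l2) (h4 : l4 ≤ l3)
    (hlb : -1 ≤ l4) (htr : 0 ≤ 1 + l2 + l3 + l4) (hcond : 0 ≤ 1 - l2 - l3 + l4) :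
    ∃ D : Matrix (Fin 4) (Fin 4) ℝ, D.IsSymm ∧ DoublyStochastic D ∧
      D.charpoly = (X - C 1) * (X - C l2) * (X - C l3) * (X - C l4) := by
  refine ⟨!![(1+l2+l3+l4)/4, (1-l2+l3-l4)/4, (1+l2-l3-l4)/4, (1-l2-l3+l4)/4;
        (1-l2+l3-l4)/4, (1+l2+l3+l4)/4, (1-l2-l3+l4)/4, (1+l2-l3-l4)/4;
        (1+l2-l3-l4)/4, (1-l2-l3+l4)/4, (1+l2+l3+l4)/4, (1-l2+l3-l4)/4;
        (1-l2-l3+l4)/4, (1+l2-l3-l4)/4, (1-l2+l3-l4)/4, (1+l2+l3+l4)/4],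
      ?_, ⟨?_, ?_, ?_⟩, ?_⟩
  · ext i j
    fin_cases i <;> fin_cases j <;> simp
  · intro i j
    fin_cases i <;> fin_cases j <;> simp <;> linarith
  · intro i
    fin_cases i <;> simp [Fin.sum_univ_four] <;> ring
  · intro j
    fin_cases j <;> simp [Fin.sum_univ_four] <;> ring
  · rw [conj_eq, charpoly_conj_aux _ _ _ hadamard_inv, diag_charpoly]
end

section
/- Let n ≥ 6 and let 1 ≥ λ₂ ≥ ... ≥ λₙ ≥ −1 be real numbers with 1 + λ₂ + ... + λₙ ≥ 0. Set S = 1/n + Σ_{j=2}^{n−3} λ_j/((n−j+2)(n−j+1)) (so that the coefficient of λ₂ is 1/(n(n−1)), of λ₃ is 1/((n−1)(n−2)), ..., of λ_{n−3} is 1/20). If both S + λ_{n−2}/4 + λ_{n−1}/4 + λₙ/4 ≥ 0 and S − λ_{n−2}/4 − λ_{n−1}/4 + λₙ/4 ≥ 0 hold, then there exists an n×n symmetric doubly stochastic matrix whose eigenvalues, counted with algebraic multiplicity, are 1, λ₂, ..., λₙ. -/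
open Matrix Polynomial

/-- The quantity `S = 1/n + ∑_{j=2}^{n-3} λⱼ/((n-j+2)(n-j+1))`. -/
noncomputable def Squant (n : ℕ) (L : ℕ → ℝ) : ℝ :=
  1 / (n : ℝ) + ∑ j ∈ Finset.Icc 2 (n - 3), L j / (((n - j + 2) * (n - j + 1) : ℕ) : ℝ)

namespace SdiepW

/-- Soules-type vector: `k` ones followed by `-k`, then zeros. -/
noncomputable def wv (k : ℕ) (P : ℕ) : ℝ :=
  if P < k then 1 else if P = k then -(k : ℝ) else 0

noncomputable def s1 (P : ℕ) : ℝ :=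
  if P = 0 then 1 else if P = 1 then 1 else if P = 2 then -1 else if P = 3 then -1 else 0
noncomputable def s2 (P : ℕ) : ℝ :=
  if P = 0 then 1 else if P = 1 then -1 else if P = 2 then 1 else if P = 3 then -1 else 0
noncomputable def s3 (P : ℕ) : ℝ :=
  if P = 0 then 1 else if P = 1 then -1 else if P = 2 then -1 else if P = 3 then 1 else 0

noncomputable def vv (n J P : ℕ) : ℝ :=
  if J = 0 then 1
  else if J + 4 ≤ n then wv (n - J) P
  else if J = n - 3 then s1 P
  else if J = n - 2 then s2 P
  else s3 P

noncomputable def Nv (n J : ℕ) : ℝ :=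
  if J = 0 then n else if J + 4 ≤ n then ((n - J) * (n - J + 1) : ℕ) else 4

noncomputable def mu (n : ℕ) (L : ℕ → ℝ) (J : ℕ) : ℝ := if J = 0 then 1 else L (J + 1)

lemma wv_lt {k P : ℕ} (h : P < k) : wv k P = 1 := if_pos h

lemma wv_eq (k : ℕ) : wv k k = -(k : ℝ) := by simp [wv]

lemma wv_gt {k P : ℕ} (h : k < P) : wv k P = 0 := by
  simp only [wv, if_neg (by omega : ¬ P < k), if_neg (by omega : ¬ P = k)]

lemma s1_ge {P : ℕ} (h : 4 ≤ P) : s1 P = 0 := by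
  simp only [s1]; split_ifs <;> first | rfl | omega

lemma s2_ge {P : ℕ} (h : 4 ≤ P) : s2 P = 0 := by
  simp only [s2]; split_ifs <;> first | rfl | omega

lemma s3_ge {P : ℕ} (h : 4 ≤ P) : s3 P = 0 := by
  simp only [s3]; split_ifs <;> first | rfl | omega

/-- truncate a sum whose summand vanishes from `m` on -/
lemma sum_trunc {m n : ℕ} (h : m ≤ n) (f : ℕ → ℝ) (h0 : ∀ P, m ≤ P → f P = 0) :
    ∑ P ∈ Finset.range n, f P = ∑ P ∈ Finset.range m, f P := by
  refine (Finset.sum_subset (Finset.range_subset_range.2 h) ?_).symm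
  intro x _ hx
  exact h0 x (by simpa using hx)

lemma sum_wv {k n : ℕ} (h : k < n) : ∑ P ∈ Finset.range n, wv k P = 0 := by
  rw [sum_trunc (by omega : k + 1 ≤ n) _ (fun P hP => wv_gt (by omega)),
    Finset.sum_range_succ, wv_eq]
  have : ∑ P ∈ Finset.range k, wv k P = ∑ P ∈ Finset.range k, 1 :=
    Finset.sum_congr rfl fun x hx => wv_lt (Finset.mem_range.1 hx)
  rw [this]; simp

lemma sum_wv_sq {k n : ℕ} (h : k < n) :
    ∑ P ∈ Finset.range n, wv k P * wv k P = (k : ℝ) * (k + 1) := by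
  rw [sum_trunc (by omega : k + 1 ≤ n) _ (fun P hP => by rw [wv_gt (by omega), zero_mul]),
    Finset.sum_range_succ, wv_eq]
  have : ∑ P ∈ Finset.range k, wv k P * wv k P = ∑ P ∈ Finset.range k, 1 :=
    Finset.sum_congr rfl fun x hx => by rw [wv_lt (Finset.mem_range.1 hx)]; norm_num
  rw [this]; simp; ring

lemma sum_wv_wv {k k' n : ℕ} (h : k' < k) (h' : k' < n) :
    ∑ P ∈ Finset.range n, wv k P * wv k' P = 0 := by
  rw [sum_trunc (by omega : k' + 1 ≤ n) _ (fun P hP => by rw [wv_gt (by omega : k' < P), mul_zero])]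
  have : ∑ P ∈ Finset.range (k' + 1), wv k P * wv k' P
      = ∑ P ∈ Finset.range (k' + 1), wv k' P :=
    Finset.sum_congr rfl fun x hx => by
      rw [wv_lt (by have := Finset.mem_range.1 hx; omega : x < k), one_mul]
  rw [this, sum_wv (by omega)]

lemma sum4 {n : ℕ} (hn : 4 ≤ n) (f : ℕ → ℝ) (h0 : ∀ P, 4 ≤ P → f P = 0) :
    ∑ P ∈ Finset.range n, f P = f 0 + f 1 + f 2 + f 3 := by
  rw [sum_trunc hn f h0]
  simp [Finset.sum_range_succ]

lemma sum_wv_s {k n : ℕ} (hk : 4 ≤ k) (hn : 4 ≤ n) (s : ℕ → ℝ) (h0 : ∀ P, 4 ≤ P → s P = 0) :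
    ∑ P ∈ Finset.range n, wv k P * s P = ∑ P ∈ Finset.range n, s P := by
  rw [sum4 hn _ (fun P hP => by rw [h0 P hP, mul_zero]), sum4 hn s h0,
    wv_lt (by omega : (0:ℕ) < k), wv_lt (by omega : (1:ℕ) < k),
    wv_lt (by omega : (2:ℕ) < k), wv_lt (by omega : (3:ℕ) < k)]
  ring

lemma sum_s1 {n : ℕ} (hn : 4 ≤ n) : ∑ P ∈ Finset.range n, s1 P = 0 := by
  rw [sum4 hn _ (fun P hP => s1_ge hP)]; norm_num [s1]

lemma sum_s2 {n : ℕ} (hn : 4 ≤ n) : ∑ P ∈ Finset.range n, s2 P = 0 := by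
  rw [sum4 hn _ (fun P hP => s2_ge hP)]; norm_num [s2]

lemma sum_s3 {n : ℕ} (hn : 4 ≤ n) : ∑ P ∈ Finset.range n, s3 P = 0 := by
  rw [sum4 hn _ (fun P hP => s3_ge hP)]; norm_num [s3]

lemma sum_s_mul {n : ℕ} (hn : 4 ≤ n) (s t : ℕ → ℝ) (h0 : ∀ P, 4 ≤ P → s P = 0) :
    ∑ P ∈ Finset.range n, s P * t P = s 0 * t 0 + s 1 * t 1 + s 2 * t 2 + s 3 * t 3 :=
  sum4 hn _ (fun P hP => by rw [h0 P hP, zero_mul])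

lemma vv_zero (n : ℕ) : vv n 0 = fun _ => (1:ℝ) := by
  funext P; simp [vv]

lemma vv_mid {n J : ℕ} (h0 : J ≠ 0) (h : J + 4 ≤ n) : vv n J = wv (n - J) := by
  funext P; simp only [vv]; rw [if_neg h0, if_pos h]

lemma vv_sp1 {n : ℕ} (hn : 6 ≤ n) : vv n (n - 3) = s1 := by
  funext P; simp only [vv]
  rw [if_neg (by omega : ¬ (n-3:ℕ) = 0), if_neg (by omega : ¬ n - 3 + 4 ≤ n)]
  simp

lemma vv_sp2 {n : ℕ} (hn : 6 ≤ n) : vv n (n - 2) = s2 := by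
  funext P; simp only [vv]
  rw [if_neg (by omega : ¬ (n-2:ℕ) = 0), if_neg (by omega : ¬ n - 2 + 4 ≤ n),
    if_neg (by omega : ¬ (n-2:ℕ) = n - 3)]
  simp

lemma vv_sp3 {n : ℕ} (hn : 6 ≤ n) : vv n (n - 1) = s3 := by
  funext P; simp only [vv]
  rw [if_neg (by omega : ¬ (n-1:ℕ) = 0), if_neg (by omega : ¬ n - 1 + 4 ≤ n),
    if_neg (by omega : ¬ (n-1:ℕ) = n - 3), if_neg (by omega : ¬ (n-1:ℕ) = n - 2)]

lemma Nv_zero (n : ℕ) : Nv n 0 = n := by simp [Nv]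

lemma Nv_mid {n J : ℕ} (h0 : J ≠ 0) (h : J + 4 ≤ n) : Nv n J = ((n - J) * (n - J + 1) : ℕ) := by
  simp only [Nv]; rw [if_neg h0, if_pos h]

lemma Nv_sp {n J : ℕ} (h0 : J ≠ 0) (h : ¬ J + 4 ≤ n) : Nv n J = 4 := by
  simp only [Nv]; rw [if_neg h0, if_neg h]

lemma vv_orth_le {n i j : ℕ} (hn : 6 ≤ n) (hj : j < n) (hij : i ≤ j) :
    ∑ P ∈ Finset.range n, vv n i P * vv n j P = if i = j then Nv n i else 0 := by
  have h4 : (4:ℕ) ≤ n := by omega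
  rcases eq_or_ne i 0 with rfl | hi0
  · rw [vv_zero]
    rcases eq_or_ne j 0 with rfl | hj0
    · rw [if_pos rfl, Nv_zero, vv_zero]; simp
    rw [if_neg (Ne.symm hj0)]
    simp only [one_mul]
    by_cases hjm : j + 4 ≤ n
    · rw [vv_mid hj0 hjm, sum_wv (by omega : n - j < n)]
    · rcases (by omega : j = n - 3 ∨ j = n - 2 ∨ j = n - 1) with rfl | rfl | rfl
      · rw [vv_sp1 hn, sum_s1 h4]
      · rw [vv_sp2 hn, sum_s2 h4]
      · rw [vv_sp3 hn, sum_s3 h4]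
  · by_cases him : i + 4 ≤ n
    · rw [vv_mid hi0 him]
      rcases eq_or_ne i j with rfl | hij'
      · rw [if_pos rfl, Nv_mid hi0 him, vv_mid hi0 him, sum_wv_sq (by omega : n - i < n)]
        push_cast
        ring
      have hj0 : j ≠ 0 := by omega
      rw [if_neg hij']
      by_cases hjm : j + 4 ≤ n
      · rw [vv_mid hj0 hjm]
        exact sum_wv_wv (by omega : n - j < n - i) (by omega)
      · have hk : 4 ≤ n - i := by omega
        rcases (by omega : j = n - 3 ∨ j = n - 2 ∨ j = n - 1) with rfl | rfl | rfl
        · rw [vv_sp1 hn, sum_wv_s hk h4 s1 (fun P hP => s1_ge hP), sum_s1 h4]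
        · rw [vv_sp2 hn, sum_wv_s hk h4 s2 (fun P hP => s2_ge hP), sum_s2 h4]
        · rw [vv_sp3 hn, sum_wv_s hk h4 s3 (fun P hP => s3_ge hP), sum_s3 h4]
    · have hjm : ¬ j + 4 ≤ n := by omega
      have hj0 : j ≠ 0 := by omega
      rcases (by omega : i = n - 3 ∨ i = n - 2 ∨ i = n - 1) with rfl | rfl | rfl <;>
        rcases (by omega : j = n - 3 ∨ j = n - 2 ∨ j = n - 1) with rfl | rfl | rfl
      · rw [if_pos rfl, Nv_sp hi0 him, vv_sp1 hn,
          sum_s_mul h4 _ _ (fun P hP => s1_ge hP)]; norm_num [s1]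
      · rw [if_neg (by omega : ¬ (n-3:ℕ) = n-2), vv_sp1 hn, vv_sp2 hn,
          sum_s_mul h4 _ _ (fun P hP => s1_ge hP)]; norm_num [s1, s2]
      · rw [if_neg (by omega : ¬ (n-3:ℕ) = n-1), vv_sp1 hn, vv_sp3 hn,
          sum_s_mul h4 _ _ (fun P hP => s1_ge hP)]; norm_num [s1, s3]
      · omega
      · rw [if_pos rfl, Nv_sp hi0 him, vv_sp2 hn,
          sum_s_mul h4 _ _ (fun P hP => s2_ge hP)]; norm_num [s2]
      · rw [if_neg (by omega : ¬ (n-2:ℕ) = n-1), vv_sp2 hn, vv_sp3 hn,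
          sum_s_mul h4 _ _ (fun P hP => s2_ge hP)]; norm_num [s2, s3]
      · omega
      · omega
      · rw [if_pos rfl, Nv_sp hi0 him, vv_sp3 hn,
          sum_s_mul h4 _ _ (fun P hP => s3_ge hP)]; norm_num [s3]

lemma vv_orth {n i j : ℕ} (hn : 6 ≤ n) (hi : i < n) (hj : j < n) :
    ∑ P ∈ Finset.range n, vv n i P * vv n j P = if i = j then Nv n i else 0 := by
  rcases le_total i j with h | h
  · exact vv_orth_le hn hj h
  · have := vv_orth_le hn hi h
    rw [Finset.sum_congr rfl (fun x _ => mul_comm (vv n i x) (vv n j x)), this]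
    rcases eq_or_ne i j with rfl | hne
    · simp
    · rw [if_neg hne, if_neg (Ne.symm hne)]

noncomputable def Vmat (n : ℕ) : Matrix (Fin n) (Fin n) ℝ :=
  Matrix.of fun p j => vv n j p

noncomputable def Dmat (n : ℕ) (L : ℕ → ℝ) : Matrix (Fin n) (Fin n) ℝ :=
  Matrix.of fun p q => ∑ j : Fin n, mu n L j * vv n j p * vv n j q / Nv n j

lemma vv_orth_fin {n : ℕ} (hn : 6 ≤ n) (i j : Fin n) :
    ∑ P : Fin n, vv n i P * vv n j P = if i = j then Nv n i else 0 := by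
  rw [Fin.sum_univ_eq_sum_range (fun P => vv n i P * vv n j P) n, vv_orth hn i.isLt j.isLt]
  rcases eq_or_ne i j with rfl | h
  · rw [if_pos rfl, if_pos rfl]
  · rw [if_neg (fun hh => h (Fin.val_injective hh)), if_neg h]

lemma Nv_pos {n J : ℕ} (hn : 6 ≤ n) (hJ : J < n) : 0 < Nv n J := by
  rcases eq_or_ne J 0 with rfl | h0
  · rw [Nv_zero]; positivity
  by_cases h : J + 4 ≤ n
  · rw [Nv_mid h0 h]
    exact_mod_cast Nat.mul_pos (by omega) (by omega)
  · rw [Nv_sp h0 h]; norm_num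

lemma VtV {n : ℕ} (hn : 6 ≤ n) :
    (Vmat n)ᵀ * Vmat n = diagonal (fun j : Fin n => Nv n j) := by
  ext i j
  rw [Matrix.mul_apply]
  simp only [transpose_apply, Vmat, Matrix.of_apply]
  rw [show (∑ k : Fin n, vv n i k * vv n j k) = if i = j then Nv n i else 0 from
    vv_orth_fin hn i j]
  rcases eq_or_ne i j with rfl | h
  · rw [if_pos rfl, diagonal_apply_eq]
  · rw [if_neg h, diagonal_apply_ne _ h]

lemma isUnit_Vmat_det {n : ℕ} (hn : 6 ≤ n) : IsUnit (Vmat n).det := by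
  have h : (Vmat n).det * (Vmat n).det = ∏ j : Fin n, Nv n j := by
    have h2 := congrArg Matrix.det (VtV (n := n) hn)
    rw [Matrix.det_mul, Matrix.det_transpose, det_diagonal] at h2
    exact h2
  have hpos : 0 < ∏ j : Fin n, Nv n j :=
    Finset.prod_pos (fun j _ => Nv_pos hn j.isLt)
  refine isUnit_iff_ne_zero.2 fun h0 => ?_
  rw [h0, mul_zero] at h
  exact hpos.ne' h.symm

lemma DV {n : ℕ} (L : ℕ → ℝ) (hn : 6 ≤ n) :
    Dmat n L * Vmat n = Vmat n * diagonal (fun j : Fin n => mu n L j) := by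
  ext p j
  rw [Matrix.mul_apply, Matrix.mul_diagonal]
  simp only [Dmat, Vmat, Matrix.of_apply]
  have e1 : ∀ q : Fin n, (∑ i : Fin n, mu n L i * vv n i p * vv n i q / Nv n i) * vv n j q
      = ∑ i : Fin n, (mu n L i * vv n i p / Nv n i) * (vv n i q * vv n j q) := by
    intro q; rw [Finset.sum_mul]; exact Finset.sum_congr rfl fun i _ => by ring
  rw [Finset.sum_congr rfl fun q _ => e1 q, Finset.sum_comm]
  have e2 : ∀ i : Fin n, ∑ q : Fin n, (mu n L i * vv n i p / Nv n i) * (vv n i q * vv n j q)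
      = (mu n L i * vv n i p / Nv n i) * (if i = j then Nv n i else 0) := by
    intro i; rw [← Finset.mul_sum, vv_orth_fin hn i j]
  rw [Finset.sum_congr rfl fun i _ => e2 i, Finset.sum_eq_single j]
  · rw [if_pos rfl]
    have hN : Nv n (j : ℕ) ≠ 0 := (Nv_pos hn j.isLt).ne'
    field_simp
  · intro i _ hij
    rw [if_neg hij, mul_zero]
  · intro h
    exact absurd (Finset.mem_univ j) h

lemma charpoly_conj {m : ℕ} (V N : Matrix (Fin m) (Fin m) ℝ) (hV : IsUnit V.det) :
    (V * N * V⁻¹).charpoly = N.charpoly := by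
  have hmapdet : IsUnit ((V.map (C : ℝ →+* ℝ[X])).det) := by
    rw [show V.map (⇑(C : ℝ →+* ℝ[X])) = (C : ℝ →+* ℝ[X]).mapMatrix V from
      (RingHom.mapMatrix_apply _ _).symm, ← RingHom.map_det]
    exact hV.map C
  have hmapu : IsUnit (V.map (C : ℝ →+* ℝ[X])) :=
    (Matrix.isUnit_iff_isUnit_det _).2 hmapdet
  have hinv : (V.map (C : ℝ →+* ℝ[X]))⁻¹ = V⁻¹.map C := by
    apply Matrix.inv_eq_right_inv
    rw [← Matrix.map_mul, Matrix.mul_nonsing_inv _ hV]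
    simp
  have key : charmatrix (V * N * V⁻¹)
      = (V.map C) * charmatrix N * (V.map C)⁻¹ := by
    rw [hinv]
    simp only [charmatrix]
    rw [Matrix.mul_sub, Matrix.sub_mul]
    congr 1
    · have hc : (V.map (C : ℝ →+* ℝ[X])) * Matrix.scalar (Fin m) X
          = Matrix.scalar (Fin m) X * (V.map C) := by
        rw [Matrix.scalar_commute X (fun r => Commute.all X r) (V.map C)]
      rw [hc, Matrix.mul_assoc, ← Matrix.map_mul, Matrix.mul_nonsing_inv _ hV]
      simp
    · simp only [RingHom.mapMatrix_apply]
      rw [← Matrix.map_mul, ← Matrix.map_mul]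
  rw [Matrix.charpoly, key, Matrix.det_conj hmapu, Matrix.charpoly]

lemma charpoly_diagonal {m : ℕ} (d : Fin m → ℝ) :
    (diagonal d).charpoly = ∏ i : Fin m, (X - C (d i)) := by
  rw [Matrix.charpoly_of_upperTriangular (diagonal d) (Matrix.blockTriangular_diagonal d)]
  simp

lemma Dmat_charpoly {n : ℕ} (L : ℕ → ℝ) (hn : 6 ≤ n) :
    (Dmat n L).charpoly = ∏ i : Fin n, (X - C (mu n L i)) := by
  have hdet := isUnit_Vmat_det (n := n) hn
  have hD : Dmat n L = Vmat n * diagonal (fun j : Fin n => mu n L j) * (Vmat n)⁻¹ := by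
    rw [← DV L hn, Matrix.mul_assoc, Matrix.mul_nonsing_inv _ hdet, Matrix.mul_one]
  rw [hD, charpoly_conj _ _ hdet, charpoly_diagonal]

lemma Dmat_isSymm {n : ℕ} (L : ℕ → ℝ) : (Dmat n L).IsSymm := by
  ext p q
  simp only [Dmat, Matrix.transpose_apply, Matrix.of_apply]
  exact Finset.sum_congr rfl fun j _ => by ring

lemma sum_vv_fin {n : ℕ} (hn : 6 ≤ n) (j : Fin n) :
    ∑ q : Fin n, vv n j q = if (j : ℕ) = 0 then Nv n 0 else 0 := by
  have h0 : (0:ℕ) < n := by omega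
  have horth := vv_orth hn h0 j.isLt
  rw [Fin.sum_univ_eq_sum_range (fun q => vv n j q) n]
  rw [vv_zero] at horth
  simp only [one_mul] at horth
  rw [horth]
  rcases eq_or_ne ((j:ℕ)) 0 with h | h
  · rw [if_pos h.symm, if_pos h]
  · rw [if_neg (Ne.symm h), if_neg h]

lemma Dmat_rowsum {n : ℕ} (L : ℕ → ℝ) (hn : 6 ≤ n) (p : Fin n) :
    ∑ q : Fin n, Dmat n L p q = 1 := by
  haveI : NeZero n := ⟨by omega⟩
  simp only [Dmat, Matrix.of_apply]
  rw [Finset.sum_comm]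
  have e1 : ∀ j : Fin n, ∑ q : Fin n, mu n L j * vv n j p * vv n j q / Nv n j
      = (mu n L j * vv n j p / Nv n j) * (if (j:ℕ) = 0 then Nv n 0 else 0) := by
    intro j
    rw [← sum_vv_fin hn j, Finset.mul_sum]
    exact Finset.sum_congr rfl fun q _ => by ring
  rw [Finset.sum_congr rfl fun j _ => e1 j, Finset.sum_eq_single (0 : Fin n)]
  · have : ((0 : Fin n) : ℕ) = 0 := rfl
    rw [this, if_pos rfl, Nv_zero, vv_zero]
    simp only [mu, if_pos rfl, ↓reduceIte]
    have hn0 : (n:ℝ) ≠ 0 := by positivity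
    field_simp
  · intro i _ hi
    rw [if_neg (fun h => hi (Fin.ext (by simpa using h))), mul_zero]
  · intro h
    exact absurd (Finset.mem_univ _) h

lemma prod_mu {n : ℕ} (L : ℕ → ℝ) (hn : 6 ≤ n) :
    ∏ i : Fin n, (X - C (mu n L i)) = (X - C 1) * ∏ j ∈ Finset.Icc 2 n, (X - C (L j)) := by
  rw [Fin.prod_univ_eq_prod_range (fun J => X - C (mu n L J)) n]
  obtain ⟨m, rfl⟩ : ∃ m, n = m + 1 := ⟨n - 1, by omega⟩
  rw [Finset.prod_range_succ']
  rw [show mu (m+1) L 0 = 1 from if_pos rfl, mul_comm]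
  congr 1
  rw [show Finset.Icc 2 (m+1) = Finset.Ico 2 (m+2) from by rw [← Finset.Ico_add_one_right_eq_Icc]; rfl]
  rw [Finset.prod_Ico_eq_prod_range]
  rw [show m + 2 - 2 = m from by omega]
  refine Finset.prod_congr rfl fun i _ => ?_
  rw [show mu (m+1) L (i+1) = L (i+2) from by simp [mu], show 2 + i = i + 2 from by omega]

noncomputable def Dfun (n : ℕ) (L : ℕ → ℝ) (P Q : ℕ) : ℝ :=
  ∑ J ∈ Finset.range n, mu n L J * vv n J P * vv n J Q / Nv n J

lemma Dmat_apply {n : ℕ} (L : ℕ → ℝ) (p q : Fin n) :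
    Dmat n L p q = Dfun n L p q :=
  Fin.sum_univ_eq_sum_range (fun J => mu n L J * vv n J p * vv n J q / Nv n J) n

lemma Dfun_comm {n : ℕ} (L : ℕ → ℝ) (P Q : ℕ) : Dfun n L P Q = Dfun n L Q P :=
  Finset.sum_congr rfl fun J _ => by ring

lemma sum_split {n : ℕ} (hn : 6 ≤ n) (f : ℕ → ℝ) :
    ∑ J ∈ Finset.range n, f J
      = f 0 + (∑ J ∈ Finset.Ico 1 (n-3), f J) + (f (n-3) + f (n-2) + f (n-1)) := by
  rw [Finset.range_eq_Ico,
    ← Finset.sum_Ico_consecutive f (by omega : (0:ℕ) ≤ 1) (by omega : 1 ≤ n),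
    ← Finset.sum_Ico_consecutive f (by omega : (1:ℕ) ≤ n-3) (by omega : n-3 ≤ n),
    show Finset.Ico 0 1 = {0} from by ext x; simp,
    show Finset.Ico (n-3) n = {n-3, n-2, n-1} from by ext x; simp; omega,
    Finset.sum_singleton,
    Finset.sum_insert (by simp; omega), Finset.sum_insert (by simp; omega),
    Finset.sum_singleton]
  ring

lemma Dfun_eq {n : ℕ} (L : ℕ → ℝ) (hn : 6 ≤ n) (P Q : ℕ) :
    Dfun n L P Q = 1/(n:ℝ)
      + (∑ J ∈ Finset.Ico 1 (n-3),
          L (J+1) * wv (n-J) P * wv (n-J) Q / (((n-J) * (n-J+1) : ℕ) : ℝ))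
      + (L (n-2) * s1 P * s1 Q / 4 + L (n-1) * s2 P * s2 Q / 4
          + L n * s3 P * s3 Q / 4) := by
  rw [Dfun, sum_split hn]
  congr 1
  · congr 1
    · rw [show mu n L 0 = 1 from if_pos rfl, vv_zero, Nv_zero]
      norm_num
    · refine Finset.sum_congr rfl fun J hJ => ?_
      have h := Finset.mem_Ico.1 hJ
      rw [show mu n L J = L (J+1) from if_neg (by omega),
        vv_mid (by omega) (by omega), Nv_mid (by omega) (by omega)]
  · rw [vv_sp1 hn, vv_sp2 hn, vv_sp3 hn,
      Nv_sp (by omega) (by omega), Nv_sp (by omega) (by omega),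
      Nv_sp (by omega) (by omega),
      show mu n L (n-3) = L (n-2) from by
        simp only [mu, if_neg (by omega : ¬ (n-3:ℕ) = 0)]; congr 1; omega,
      show mu n L (n-2) = L (n-1) from by
        simp only [mu, if_neg (by omega : ¬ (n-2:ℕ) = 0)]; congr 1; omega,
      show mu n L (n-1) = L n from by
        simp only [mu, if_neg (by omega : ¬ (n-1:ℕ) = 0)]; congr 1; omega]

lemma csum {n : ℕ} (hn : 6 ≤ n) (a : ℕ) (ha1 : 1 ≤ a) (han : a ≤ n) :
    ∑ J ∈ Finset.Ico 1 a, (1:ℝ)/(((n-J) * (n-J+1) : ℕ) : ℝ)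
      = 1/((n-a+1 : ℕ):ℝ) - 1/(n:ℝ) := by
  induction a, ha1 using Nat.le_induction with
  | base =>
    rw [Finset.Ico_self, Finset.sum_empty, show n - 1 + 1 = n from by omega]
    ring
  | succ a ha ih =>
    rw [Finset.sum_Ico_succ_top ha, ih (by omega)]
    have hb : 1 ≤ n - a := by omega
    have h1 : n - (a+1) + 1 = n - a := by omega
    have h2 : n - a + 1 = (n - a) + 1 := rfl
    rw [h1]
    have hbR : (0:ℝ) < ((n - a : ℕ) : ℝ) := by exact_mod_cast hb
    have hnR : (0:ℝ) < (n:ℝ) := by positivity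
    push_cast
    field_simp
    ring

lemma Smid_eq {n : ℕ} (L : ℕ → ℝ) (hn : 6 ≤ n) :
    ∑ J ∈ Finset.Ico 1 (n-3), L (J+1) / (((n-J) * (n-J+1) : ℕ) : ℝ)
      = Squant n L - 1/(n:ℝ) := by
  rw [Squant,
    show Finset.Icc 2 (n-3) = Finset.Ico 2 (n-2) from by
      ext x; simp only [Finset.mem_Icc, Finset.mem_Ico]; omega,
    Finset.sum_Ico_eq_sum_range, Finset.sum_Ico_eq_sum_range,
    show n-3-1 = n-4 from by omega, show n-2-2 = n-4 from by omega]
  have key : ∀ i ∈ Finset.range (n-4),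
      L (1+i+1) / (((n-(1+i)) * (n-(1+i)+1) : ℕ) : ℝ)
        = L (2+i) / (((n-(2+i)+2) * (n-(2+i)+1) : ℕ) : ℝ) := by
    intro i hi
    have hi' := Finset.mem_range.1 hi
    rw [show 1+i+1 = 2+i from by omega, show n-(2+i)+2 = n-(1+i)+1 from by omega,
      show n-(2+i)+1 = n-(1+i) from by omega, Nat.mul_comm]
  rw [Finset.sum_congr rfl key]
  ring

lemma Dfun_nonneg {n : ℕ} (L : ℕ → ℝ) (hn : 6 ≤ n) (hub : L 2 ≤ 1)
    (hmono : ∀ i j, 2 ≤ i → i ≤ j → j ≤ n → L j ≤ L i)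
    (hcond1 : 0 ≤ Squant n L + L (n-2)/4 + L (n-1)/4 + L n/4)
    (hcond2 : 0 ≤ Squant n L - L (n-2)/4 - L (n-1)/4 + L n/4)
    {P Q : ℕ} (hP : P < n) (hQ : Q < n) (hPQ : P ≤ Q) : 0 ≤ Dfun n L P Q := by
  have hac : L n ≤ L (n-2) := hmono (n-2) n (by omega) (by omega) le_rfl
  have hbc : L n ≤ L (n-1) := hmono (n-1) n (by omega) (by omega) le_rfl
  rw [Dfun_eq L hn P Q]
  by_cases hQ3 : Q ≤ 3
  · -- both indices in the 4-block
    have hP3 : P ≤ 3 := le_trans hPQ hQ3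
    have hmid : ∑ J ∈ Finset.Ico 1 (n-3),
        L (J+1) * wv (n-J) P * wv (n-J) Q / (((n-J) * (n-J+1) : ℕ) : ℝ)
        = ∑ J ∈ Finset.Ico 1 (n-3), L (J+1) / (((n-J) * (n-J+1) : ℕ) : ℝ) := by
      refine Finset.sum_congr rfl fun J hJ => ?_
      have h := Finset.mem_Ico.1 hJ
      rw [wv_lt (by omega : P < n - J), wv_lt (by omega : Q < n - J), mul_one, mul_one]
    rw [hmid, Smid_eq L hn]
    interval_cases P <;> interval_cases Q <;>
      simp only [s1, s2, s3] <;> norm_num <;> linarith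
  · -- Q ≥ 4
    have hQ4 : 4 ≤ Q := by omega
    have hs : L (n-2) * s1 P * s1 Q / 4 + L (n-1) * s2 P * s2 Q / 4
        + L n * s3 P * s3 Q / 4 = 0 := by
      rw [s1_ge (P := Q) (by omega), s2_ge (P := Q) (by omega), s3_ge (P := Q) (by omega)]
      ring
    rw [hs, add_zero]
    rw [← Finset.sum_Ico_consecutive _ (by omega : 1 ≤ n-Q) (by omega : n-Q ≤ n-3)]
    have h1 : ∑ J ∈ Finset.Ico 1 (n-Q),
        L (J+1) * wv (n-J) P * wv (n-J) Q / (((n-J) * (n-J+1) : ℕ) : ℝ)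
        = ∑ J ∈ Finset.Ico 1 (n-Q), L (J+1) / (((n-J) * (n-J+1) : ℕ) : ℝ) := by
      refine Finset.sum_congr rfl fun J hJ => ?_
      have h := Finset.mem_Ico.1 hJ
      rw [wv_lt (by omega : P < n - J), wv_lt (by omega : Q < n - J), mul_one, mul_one]
    have h2 : ∑ J ∈ Finset.Ico (n-Q) (n-3),
        L (J+1) * wv (n-J) P * wv (n-J) Q / (((n-J) * (n-J+1) : ℕ) : ℝ)
        = L (n-Q+1) * wv Q P * wv Q Q / ((Q * (Q+1) : ℕ) : ℝ) := by
      rw [Finset.sum_eq_single_of_mem (n-Q)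
        (Finset.mem_Ico.2 ⟨le_rfl, by omega⟩)]
      · rw [show n-(n-Q) = Q from by omega]
      · intro J hJ hne
        have h := Finset.mem_Ico.1 hJ
        rw [wv_gt (by omega : n - J < Q), mul_zero, zero_div]
    rw [h1, h2]
    -- common sum bounds
    have hcsum1 : ∑ J ∈ Finset.Ico 1 (n-Q), (1:ℝ)/(((n-J) * (n-J+1) : ℕ) : ℝ)
        = 1/((Q:ℝ)+1) - 1/(n:ℝ) := by
      rw [csum hn (n-Q) (by omega) (by omega), show n-(n-Q)+1 = Q+1 from by omega]
      push_cast
      ring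
    have hLstar : L (n-Q+1) ≤ 1 :=
      le_trans (hmono 2 (n-Q+1) le_rfl (by omega) (by omega)) hub
    have hQR : (0:ℝ) < (Q:ℝ) := by positivity
    have hQ1R : (0:ℝ) < (Q:ℝ) + 1 := by positivity
    have hnR : (0:ℝ) < (n:ℝ) := by positivity
    have hlow : L (n-Q+1) * (1/((Q:ℝ)+1) - 1/(n:ℝ))
        ≤ ∑ J ∈ Finset.Ico 1 (n-Q), L (J+1) / (((n-J) * (n-J+1) : ℕ) : ℝ) := by
      rw [← hcsum1, Finset.mul_sum]
      refine Finset.sum_le_sum fun J hJ => ?_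
      have h := Finset.mem_Ico.1 hJ
      have hc : (0:ℝ) < (((n-J) * (n-J+1) : ℕ) : ℝ) := by
        exact_mod_cast Nat.mul_pos (by omega) (by omega)
      rw [mul_one_div]
      exact (div_le_div_iff_of_pos_right hc).2 (hmono (J+1) (n-Q+1) (by omega) (by omega) (by omega))
    set x := L (n-Q+1) with hxdef
    rcases eq_or_lt_of_le hPQ with rfl | hPltQ
    · -- diagonal entry, P = Q
      have e : x * wv P P * wv P P / ((P * (P+1) : ℕ) : ℝ)
          = x - x * (1/((P:ℝ)+1)) := by
        rw [wv_eq]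
        push_cast
        field_simp
        ring
      have hsum : ∑ J ∈ Finset.Ico (n-P) (n-3), (1:ℝ)/(((n-J) * (n-J+1) : ℕ) : ℝ)
          = 1/4 - 1/((P:ℝ)+1) := by
        have hc2 : ∑ J ∈ Finset.Ico 1 (n-3), (1:ℝ)/(((n-J) * (n-J+1) : ℕ) : ℝ)
            = 1/4 - 1/(n:ℝ) := by
          rw [csum hn (n-3) (by omega) (by omega), show n-(n-3)+1 = 4 from by omega]
          norm_num
        have hs2 := Finset.sum_Ico_consecutive
          (fun J => (1:ℝ)/(((n-J) * (n-J+1) : ℕ) : ℝ))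
          (by omega : 1 ≤ n-P) (by omega : n-P ≤ n-3)
        linarith
      have htail : ∑ J ∈ Finset.Ico (n-P) (n-3), L (J+1) / (((n-J) * (n-J+1) : ℕ) : ℝ)
          ≤ x * (1/4 - 1/((P:ℝ)+1)) := by
        rw [← hsum, Finset.mul_sum]
        refine Finset.sum_le_sum fun J hJ => ?_
        have h := Finset.mem_Ico.1 hJ
        have hc : (0:ℝ) < (((n-J) * (n-J+1) : ℕ) : ℝ) := by
          exact_mod_cast Nat.mul_pos (by omega) (by omega)
        rw [mul_one_div]
        exact (div_le_div_iff_of_pos_right hc).2 (hmono (n-P+1) (J+1) (by omega) (by omega) (by omega))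
      have hfull := Smid_eq L hn
      have hsplit := Finset.sum_Ico_consecutive
        (fun J => L (J+1) / (((n-J) * (n-J+1) : ℕ) : ℝ))
        (by omega : 1 ≤ n-P) (by omega : n-P ≤ n-3)
      have h3 : L (n-2) ≤ x := hmono (n-P+1) (n-2) (by omega) (by omega) (by omega)
      have h4 : L (n-1) ≤ x := hmono (n-P+1) (n-1) (by omega) (by omega) (by omega)
      have h5 : L n ≤ x := hmono (n-P+1) n (by omega) (by omega) (by omega)
      have hr1 : x * (1/4 - 1/((P:ℝ)+1)) = x * (1/4) - x * (1/((P:ℝ)+1)) := by ring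
      rw [e]
      linarith
    · -- off-diagonal entry, P < Q
      have e : x * wv Q P * wv Q Q / ((Q * (Q+1) : ℕ) : ℝ)
          = - (x * (1/((Q:ℝ)+1))) := by
        rw [wv_eq, wv_lt hPltQ]
        push_cast
        field_simp
      have hkey : 0 ≤ (1 - x) * (1/(n:ℝ)) := mul_nonneg (by linarith) (by positivity)
      have hr1 : x * (1/((Q:ℝ)+1) - 1/(n:ℝ)) = x * (1/((Q:ℝ)+1)) - x * (1/(n:ℝ)) := by ring
      have hr2 : (1 - x) * (1/(n:ℝ)) = 1/(n:ℝ) - x * (1/(n:ℝ)) := by ring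
      rw [e]
      linarith

end SdiepW

/-- For `n ≥ 6`, `1 ≥ λ₂ ≥ ⋯ ≥ λₙ ≥ -1` with `1 + λ₂ + ⋯ + λₙ ≥ 0`: if both
`S + λ_{n-2}/4 + λ_{n-1}/4 + λₙ/4 ≥ 0` and `S - λ_{n-2}/4 - λ_{n-1}/4 + λₙ/4 ≥ 0`, then
`1, λ₂, …, λₙ` is the spectrum of an `n × n` symmetric doubly stochastic matrix. -/
theorem sdiep_W (n : ℕ) (hn : 6 ≤ n) (L : ℕ → ℝ) (hub : L 2 ≤ 1)
    (hdec : ∀ j, 2 ≤ j → j < n → L (j + 1) ≤ L j)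
    (hlb : -1 ≤ L n)
    (htr : 0 ≤ 1 + ∑ j ∈ Finset.Icc 2 n, L j)
    (hcond1 : 0 ≤ Squant n L + L (n - 2) / 4 + L (n - 1) / 4 + L n / 4)
    (hcond2 : 0 ≤ Squant n L - L (n - 2) / 4 - L (n - 1) / 4 + L n / 4) :
    ∃ D : Matrix (Fin n) (Fin n) ℝ, D.IsSymm ∧ DoublyStochastic D ∧
      D.charpoly = (X - C 1) * ∏ j ∈ Finset.Icc 2 n, (X - C (L j)) := by
  have hmono : ∀ i j, 2 ≤ i → i ≤ j → j ≤ n → L j ≤ L i := by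
    intro i j h2 hij hjn
    induction j, hij using Nat.le_induction with
    | base => exact le_rfl
    | succ j hj ih =>
      exact le_trans (hdec j (by omega) (by omega)) (ih (by omega))
  refine ⟨SdiepW.Dmat n L, SdiepW.Dmat_isSymm L, ⟨?_, ?_, ?_⟩, ?_⟩
  · intro p q
    rw [SdiepW.Dmat_apply]
    rcases le_total (p : ℕ) (q : ℕ) with h | h
    · exact SdiepW.Dfun_nonneg L hn hub hmono hcond1 hcond2 p.isLt q.isLt h
    · rw [SdiepW.Dfun_comm]
      exact SdiepW.Dfun_nonneg L hn hub hmono hcond1 hcond2 q.isLt p.isLt h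
  · exact SdiepW.Dmat_rowsum L hn
  · intro q
    have : ∀ i : Fin n, SdiepW.Dmat n L i q = SdiepW.Dmat n L q i := by
      intro i
      rw [SdiepW.Dmat_apply, SdiepW.Dmat_apply, SdiepW.Dfun_comm]
    rw [Finset.sum_congr rfl fun i _ => this i]
    exact SdiepW.Dmat_rowsum L hn q
  · rw [SdiepW.Dmat_charpoly L hn, SdiepW.prod_mu L hn]
end

section
/- Let X be a 3×3 doubly stochastic matrix whose eigenvalues, counted with algebraic multiplicity, are the real numbers 1, λ, μ. Then −1 ≤ λ ≤ 1, −1 ≤ μ ≤ 1, λ + 3μ + 2 ≥ 0, and 3λ + μ + 2 ≥ 0. -/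
open Matrix Polynomial

private lemma aux_I1 (a b d e : ℝ) (ha : 0 ≤ a) (hb : 0 ≤ b) (hd : 0 ≤ d) (he : 0 ≤ e)
    (hc : a+b ≤ 1) (hf : d+e ≤ 1) (hi : 1 ≤ a+b+d+e) :
    0 ≤ a+2*b+2*d+e-1-3*b*d+3*a*e := by
  nlinarith [mul_nonneg ha he, mul_nonneg hb hd, sq_nonneg (b-d), sq_nonneg (a-e),
    mul_nonneg ha hb, mul_nonneg hd he, mul_nonneg ha hd, mul_nonneg hb he]

private lemma aux_I3 (a b d e : ℝ) (ha : 0 ≤ a) (he : 0 ≤ e) (hi : 1 ≤ a+b+d+e) :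
    0 ≤ -4*e+4*e^2+4*d*e+d^2+4*b*e-2*b*d+b^2-4*a+12*a*e+4*a*d+4*a*b+4*a^2 := by
  nlinarith [sq_nonneg (b-d), mul_nonneg ha he,
    mul_nonneg (add_nonneg ha he) (by linarith : (0:ℝ) ≤ a+b+d+e-1)]

private lemma sign_helper (x y : ℝ) (hprod : 0 ≤ x * y) (hsum : 0 ≤ x + y) : 0 ≤ x := by
  nlinarith [hprod, hsum, sq_nonneg x]

set_option maxHeartbeats 1000000 in
/-- If a `3 × 3` doubly stochastic matrix has real eigenvalues `1, λ, μ` (with algebraic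
multiplicity), then `-1 ≤ λ ≤ 1`, `-1 ≤ μ ≤ 1`, `λ + 3μ + 2 ≥ 0` and `3λ + μ + 2 ≥ 0`. -/
theorem rdiep_three_necessary (lam mu : ℝ) (D : Matrix (Fin 3) (Fin 3) ℝ)
    (hDS : DoublyStochastic D)
    (hspec : D.charpoly = (X - C 1) * (X - C lam) * (X - C mu)) :
    -1 ≤ lam ∧ lam ≤ 1 ∧ -1 ≤ mu ∧ mu ≤ 1 ∧
      0 ≤ lam + 3 * mu + 2 ∧ 0 ≤ 3 * lam + mu + 2 := by
  obtain ⟨hpos, hrow, hcol⟩ := hDS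
  have h00 := hpos 0 0; have h01 := hpos 0 1; have h02 := hpos 0 2
  have h10 := hpos 1 0; have h11 := hpos 1 1; have h12 := hpos 1 2
  have h20 := hpos 2 0; have h21 := hpos 2 1; have h22 := hpos 2 2
  have r1 := hrow 0; have r2 := hrow 1; have r3 := hrow 2
  have c1 := hcol 0; have c2 := hcol 1; have c3 := hcol 2
  simp only [Fin.sum_univ_three] at r1 r2 r3 c1 c2 c3
  -- evaluate the characteristic polynomial identity at any real `r`
  have hev : ∀ r : ℝ,
      (r - D 0 0) * ((r - D 1 1) * (r - D 2 2) - D 1 2 * D 2 1)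
        - D 0 1 * (D 1 0 * (r - D 2 2) + D 1 2 * D 2 0)
        - D 0 2 * (D 1 0 * D 2 1 + (r - D 1 1) * D 2 0)
        = (r - 1) * (r - lam) * (r - mu) := by
    intro r
    have h := congrArg (Polynomial.eval r) hspec
    rw [Matrix.charpoly, ← Polynomial.coe_evalRingHom, RingHom.map_det,
      Matrix.det_fin_three] at h
    simp only [RingHom.mapMatrix_apply, Matrix.map_apply, charmatrix_apply_eq,
      charmatrix_apply_ne _ _ _ (by decide : (0:Fin 3) ≠ 1),
      charmatrix_apply_ne _ _ _ (by decide : (0:Fin 3) ≠ 2),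
      charmatrix_apply_ne _ _ _ (by decide : (1:Fin 3) ≠ 0),
      charmatrix_apply_ne _ _ _ (by decide : (1:Fin 3) ≠ 2),
      charmatrix_apply_ne _ _ _ (by decide : (2:Fin 3) ≠ 0),
      charmatrix_apply_ne _ _ _ (by decide : (2:Fin 3) ≠ 1),
      coe_evalRingHom, eval_sub, eval_X, eval_C, eval_neg, eval_mul, eval_one] at h
    linear_combination h
  have e0 := hev 0
  have em1 := hev (-1)
  have e2 := hev 2
  -- shorthand for the entries
  set a := D 0 0; set b := D 0 1; set c := D 0 2
  set d := D 1 0; set e := D 1 1; set f := D 1 2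
  set g := D 2 0; set h := D 2 1; set i := D 2 2
  -- eliminate c, f, g, h, i
  have hc2 : c = 1 - a - b := by linarith
  have hf2 : f = 1 - d - e := by linarith
  have hg2 : g = 1 - a - d := by linarith
  have hh2 : h = 1 - b - e := by linarith
  have hi2 : i = a + b + d + e - 1 := by linarith
  rw [hc2, hf2, hg2, hh2, hi2] at e0 em1 e2
  -- trace and determinant identities
  have hT : lam + mu = 2*a + 2*e + b + d - 2 := by
    linear_combination (2*em1 + e2 - 3*e0)/6
  have hP : lam * mu = b + d - a - e + 3*a*e - 3*b*d := by linear_combination e0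
  -- nonneg facts on the four free entries
  have hb1 : a + b ≤ 1 := by linarith
  have hb2 : d + e ≤ 1 := by linarith
  have hb3 : a + d ≤ 1 := by linarith
  have hb4 : b + e ≤ 1 := by linarith
  have hb5 : 1 ≤ a + b + d + e := by linarith
  -- the three key products
  have hI1 : 0 ≤ (1 + lam) * (1 + mu) := by
    have key := aux_I1 a b d e h00 h01 h10 h11 hb1 hb2 hb5
    have heq : (1 + lam) * (1 + mu) = a+2*b+2*d+e-1-3*b*d+3*a*e := by
      linear_combination hT + hP
    linarith [key, heq.ge, heq.le]
  have hI2 : 0 ≤ (1 - lam) * (1 - mu) := by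
    have hbd : b * d ≤ (1-a) * (1-e) :=
      mul_le_mul (by linarith) (by linarith) h10 (by linarith)
    have heq : (1 - lam) * (1 - mu) = 3*(1 - a - e + a*e - b*d) := by
      linear_combination hP - hT
    nlinarith [hbd, heq.le, heq.ge]
  have hI3 : 0 ≤ (lam + 3*mu + 2) * (3*lam + mu + 2) := by
    have key := aux_I3 a b d e h00 h11 hb5
    have heq : (lam + 3*mu + 2) * (3*lam + mu + 2) =
        3*(-4*e+4*e^2+4*d*e+d^2+4*b*e-2*b*d+b^2-4*a+12*a*e+4*a*d+4*a*b+4*a^2) := by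
      linear_combination (3*(lam + mu + (2*a + 2*e + b + d - 2)) + 8)*hT + 4*hP
    linarith [key, heq.le, heq.ge]
  have hTlo : -1 ≤ lam + mu := by nlinarith [hT, h00, h11, hb5]
  have hThi : lam + mu ≤ 2 := by nlinarith [hT, hb1, hb2, hb3, hb4]
  have g1 : 0 ≤ 1 + lam := sign_helper _ _ hI1 (by linarith)
  have g2 : 0 ≤ 1 + mu := sign_helper _ _ (by linarith [hI1, mul_comm (1+lam) (1+mu)] : 0 ≤ (1+mu)*(1+lam)) (by linarith)
  have g3 : 0 ≤ 1 - lam := sign_helper _ _ hI2 (by linarith)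
  have g4 : 0 ≤ 1 - mu := sign_helper _ _ (by linarith [hI2, mul_comm (1-lam) (1-mu)] : 0 ≤ (1-mu)*(1-lam)) (by linarith)
  have g5 : 0 ≤ lam + 3*mu + 2 := sign_helper _ _ hI3 (by linarith)
  have g6 : 0 ≤ 3*lam + mu + 2 :=
    sign_helper _ _ (by linarith [hI3, mul_comm (lam+3*mu+2) (3*lam+mu+2)] : 0 ≤ (3*lam+mu+2)*(lam+3*mu+2)) (by linarith)
  exact ⟨by linarith, by linarith, by linarith, by linarith, by linarith, by linarith⟩
end

section
/- Let λ and μ be real numbers. There exists a 3×3 doubly stochastic matrix whose eigenvalues, counted with algebraic multiplicity, are 1, λ, μ if and only if there exists a symmetric 3×3 doubly stochastic matrix whose eigenvalues, counted with algebraic multiplicity, are 1, λ, μ. (That is, the real and the symmetric doubly stochastic inverse eigenvalue problems are equivalent for n = 3.) -/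
open Matrix Polynomial

private lemma charpoly_sym_aux (a p : ℝ) :
    (Matrix.of ![![1-2*a, a, a], ![a, 1-p-a, p], ![a, p, 1-p-a]]).charpoly
      = (X - C 1) * (X - C (1-3*a)) * (X - C (1-2*p-a)) := by
  rw [Matrix.charpoly, Matrix.det_fin_three]
  simp only [charmatrix_apply_eq, charmatrix_apply_ne _ _ _ (by decide : (0:Fin 3) ≠ 1),
    charmatrix_apply_ne _ _ _ (by decide : (0:Fin 3) ≠ 2),
    charmatrix_apply_ne _ _ _ (by decide : (1:Fin 3) ≠ 0),
    charmatrix_apply_ne _ _ _ (by decide : (1:Fin 3) ≠ 2),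
    charmatrix_apply_ne _ _ _ (by decide : (2:Fin 3) ≠ 0),
    charmatrix_apply_ne _ _ _ (by decide : (2:Fin 3) ≠ 1)]
  simp only [Matrix.of_apply, Matrix.cons_val', Matrix.cons_val_zero, Matrix.cons_val_one,
    Matrix.head_cons, Matrix.empty_val', Matrix.cons_val_fin_one, Matrix.head_fin_const,
    Matrix.cons_val_two, Matrix.tail_cons]
  simp only [C_sub, C_add, C_mul, C_1, map_ofNat]
  ring

private lemma ineq1_aux (a b d e : ℝ) (h1:0≤a) (h2:0≤b) (h3:0≤1-a-b) (h4:0≤d) (h5:0≤e)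
    (h6:0≤1-d-e) (h7:0≤1-a-d) (h8:0≤1-b-e) (h9:0≤a+b+d+e-1) :
    a+e+(a+b+d+e-1) - 2 ≤ a*(e*(a+b+d+e-1)-(1-d-e)*(1-b-e))
      - b*(d*(a+b+d+e-1)-(1-d-e)*(1-a-d)) + (1-a-b)*(d*(1-b-e)-e*(1-a-d)) := by
  nlinarith [mul_nonneg h1 h2, mul_nonneg h4 h5, mul_nonneg h3 h6, mul_nonneg h7 h8,
    mul_nonneg (mul_nonneg h1 h5) h9, mul_nonneg (mul_nonneg h2 h4) h9,
    mul_nonneg (mul_nonneg h3 h6) h9, mul_nonneg h1 h9, mul_nonneg h5 h9, mul_nonneg h9 h9]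

private lemma ineq2_aux (a b d e : ℝ) (h1:0≤a) (h2:0≤b) (h3:0≤1-a-b) (h4:0≤d) (h5:0≤e)
    (h6:0≤1-d-e) (h7:0≤1-a-d) (h8:0≤1-b-e) (h9:0≤a+b+d+e-1) :
    0 ≤ 3*(2*a+b+d+2*e-1)^2 + 2*(2*a+b+d+2*e-1) - 1
      + 4*(a*(e*(a+b+d+e-1)-(1-d-e)*(1-b-e))
      - b*(d*(a+b+d+e-1)-(1-d-e)*(1-a-d)) + (1-a-b)*(d*(1-b-e)-e*(1-a-d))) := by
  nlinarith [mul_nonneg h1 h5, mul_nonneg h2 h4, mul_nonneg h3 h6, mul_nonneg h7 h8,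
    mul_nonneg (mul_nonneg h1 h5) h9, mul_nonneg (mul_nonneg h2 h4) h9,
    mul_nonneg (mul_nonneg h3 h6) h9, mul_nonneg h1 h9, mul_nonneg h5 h9,
    sq_nonneg (a+e-b-d), sq_nonneg (a-e), sq_nonneg (b-d), sq_nonneg (a+b+d+e-1),
    mul_nonneg (mul_nonneg h2 h4) h6, mul_nonneg (mul_nonneg h1 h5) h3,
    mul_nonneg h2 h6, mul_nonneg h4 h6, mul_nonneg h1 h3, mul_nonneg h5 h3]

/-- extract trace and det from the charpoly hypothesis -/
private lemma trace_det_aux (lam mu : ℝ) (M : Matrix (Fin 3) (Fin 3) ℝ)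
    (hcp : M.charpoly = (X - C 1) * (X - C lam) * (X - C mu)) :
    M.trace = 1 + lam + mu ∧ M.det = lam * mu := by
  have hexp : (X - C 1) * (X - C lam) * (X - C mu)
      = X^3 - C (1+lam+mu) * X^2 + C (lam+mu+lam*mu) * X - C (lam*mu) := by
    simp only [C_add, C_mul, C_1]; ring
  rw [hexp] at hcp
  have hc2 : M.charpoly.coeff 2 = -(1+lam+mu) := by
    rw [hcp]
    simp only [coeff_add, coeff_sub, coeff_C_mul, coeff_X_pow, coeff_C, coeff_X]; norm_num
  have hc0 : M.charpoly.coeff 0 = -(lam*mu) := by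
    rw [hcp]
    simp only [coeff_add, coeff_sub, coeff_C_mul, coeff_X_pow, coeff_C, coeff_X]; norm_num
  constructor
  · have := Matrix.trace_eq_neg_charpoly_coeff M
    simp at this
    rw [this, hc2]; ring
  · have := Matrix.det_eq_sign_charpoly_coeff M
    simp at this
    rw [this, hc0]; ring

/-- the construction of a symmetric doubly stochastic matrix, assuming `mu ≤ lam` -/
private lemma construct_aux (lam mu : ℝ) (hml : mu ≤ lam) (hl1 : lam ≤ 1)
    (hpm : 0 ≤ 2 + lam + 3*mu) :
    ∃ D : Matrix (Fin 3) (Fin 3) ℝ, D.IsSymm ∧ DoublyStochastic D ∧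
      D.charpoly = (X - C 1) * (X - C lam) * (X - C mu) := by
  have hmu1 : mu ≤ 1 := le_trans hml hl1
  obtain ⟨a, ha⟩ : ∃ a : ℝ, a = (1-lam)/3 := ⟨_, rfl⟩
  obtain ⟨p, hp⟩ : ∃ p : ℝ, p = (2+lam-3*mu)/6 := ⟨_, rfl⟩
  have ha0 : 0 ≤ a := by rw [ha]; linarith
  have hp0 : 0 ≤ p := by rw [hp]; linarith
  have hd1 : 0 ≤ 1 - 2*a := by rw [ha]; linarith
  have hd2 : 0 ≤ 1 - p - a := by rw [hp, ha]; linarith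
  refine ⟨Matrix.of ![![1-2*a, a, a], ![a, 1-p-a, p], ![a, p, 1-p-a]], ?_, ⟨?_, ?_, ?_⟩, ?_⟩
  · unfold Matrix.IsSymm
    ext i j
    fin_cases i <;> fin_cases j <;> simp [Matrix.vecHead, Matrix.vecTail]
  · intro i j
    fin_cases i <;> fin_cases j <;> simp [Matrix.vecHead, Matrix.vecTail] <;> linarith
  · intro i
    fin_cases i <;> simp [Fin.sum_univ_three, Matrix.vecHead, Matrix.vecTail] <;> ring
  · intro j
    fin_cases j <;> simp [Fin.sum_univ_three, Matrix.vecHead, Matrix.vecTail] <;> ring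
  · rw [charpoly_sym_aux a p]
    have h1 : 1 - 3*a = lam := by rw [ha]; ring
    have h2 : 1 - 2*p - a = mu := by rw [hp, ha]; ring
    rw [h1, h2]

set_option maxHeartbeats 1000000 in
private lemma forward_aux (lam mu : ℝ) (hml : mu ≤ lam)
    (hD : ∃ D : Matrix (Fin 3) (Fin 3) ℝ, DoublyStochastic D ∧
        D.charpoly = (X - C 1) * (X - C lam) * (X - C mu)) :
    ∃ D : Matrix (Fin 3) (Fin 3) ℝ, D.IsSymm ∧ DoublyStochastic D ∧
      D.charpoly = (X - C 1) * (X - C lam) * (X - C mu) := by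
  obtain ⟨M, ⟨hnn, hrow, hcol⟩, hcp⟩ := hD
  obtain ⟨htr, hdet⟩ := trace_det_aux lam mu M hcp
  have hr0 := hrow 0; have hr1 := hrow 1; have hr2 := hrow 2
  have hc0 := hcol 0; have hc1 := hcol 1; have hc2 := hcol 2
  simp only [Fin.sum_univ_three] at hr0 hr1 hr2 hc0 hc1 hc2
  obtain ⟨a, ha⟩ : ∃ x : ℝ, x = M 0 0 := ⟨_, rfl⟩
  obtain ⟨b, hb⟩ : ∃ x : ℝ, x = M 0 1 := ⟨_, rfl⟩
  obtain ⟨d, hd⟩ : ∃ x : ℝ, x = M 1 0 := ⟨_, rfl⟩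
  obtain ⟨e, he⟩ : ∃ x : ℝ, x = M 1 1 := ⟨_, rfl⟩
  simp only [← ha, ← hb, ← hd, ← he] at hr0 hr1 hr2 hc0 hc1 hc2
  have h02 : M 0 2 = 1 - a - b := by linarith
  have h12 : M 1 2 = 1 - d - e := by linarith
  have h20 : M 2 0 = 1 - a - d := by linarith
  have h21 : M 2 1 = 1 - b - e := by linarith
  have h22 : M 2 2 = a + b + d + e - 1 := by linarith
  have h1 : 0 ≤ a := by rw [ha]; exact hnn 0 0
  have h2 : 0 ≤ b := by rw [hb]; exact hnn 0 1
  have h3 : 0 ≤ 1 - a - b := by have := hnn 0 2; linarith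
  have h4 : 0 ≤ d := by rw [hd]; exact hnn 1 0
  have h5 : 0 ≤ e := by rw [he]; exact hnn 1 1
  have h6 : 0 ≤ 1 - d - e := by have := hnn 1 2; linarith
  have h7 : 0 ≤ 1 - a - d := by have := hnn 2 0; linarith
  have h8 : 0 ≤ 1 - b - e := by have := hnn 2 1; linarith
  have h9 : 0 ≤ a + b + d + e - 1 := by have := hnn 2 2; linarith
  have htr' : M.trace = 2*a + b + d + 2*e - 1 := by
    rw [Matrix.trace_fin_three, h22, ← ha, ← he]; ring
  have hdet' : M.det = a*(e*(a+b+d+e-1)-(1-d-e)*(1-b-e))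
      - b*(d*(a+b+d+e-1)-(1-d-e)*(1-a-d)) + (1-a-b)*(d*(1-b-e)-e*(1-a-d)) := by
    rw [Matrix.det_fin_three, h02, h12, h20, h21, h22, ← ha, ← hb, ← hd, ← he]; ring
  have hT : 1 + lam + mu = 2*a + b + d + 2*e - 1 := by rw [← htr, htr']
  have hDet : lam * mu = a*(e*(a+b+d+e-1)-(1-d-e)*(1-b-e))
      - b*(d*(a+b+d+e-1)-(1-d-e)*(1-a-d)) + (1-a-b)*(d*(1-b-e)-e*(1-a-d)) := by
    rw [← hdet, hdet']
  clear hcp htr hdet htr' hdet' hnn hrow hcol hr0 hr1 hr2 hc0 hc1 hc2 h02 h12 h20 h21 h22 ha hb hd he M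
  have hA : 0 ≤ 1 + lam + mu := by rw [hT]; linarith
  have hB : 1 + lam + mu ≤ 3 := by rw [hT]; linarith
  have hC : (1 + lam + mu) - 2 ≤ lam * mu := by
    rw [hT, hDet]
    have := ineq1_aux a b d e h1 h2 h3 h4 h5 h6 h7 h8 h9
    linarith
  have hDineq : 0 ≤ 3*(1+lam+mu)^2 + 2*(1+lam+mu) - 1 + 4*(lam*mu) := by
    rw [hT, hDet]
    exact ineq2_aux a b d e h1 h2 h3 h4 h5 h6 h7 h8 h9
  have hl1 : lam ≤ 1 := by nlinarith
  have hpm : 0 ≤ 2 + lam + 3*mu := by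
    nlinarith [sq_nonneg (lam+mu+1), sq_nonneg (2*mu+1), sq_nonneg (lam-mu), mul_nonneg hA hA]
  exact construct_aux lam mu hml hl1 hpm

/-- The real and symmetric doubly stochastic inverse eigenvalue problems are equivalent for
`n = 3`: there is a `3 × 3` doubly stochastic matrix with eigenvalues `1, λ, μ` if and only
if there is a symmetric one. -/
theorem rdiep_eq_sdiep_three (lam mu : ℝ) :
    (∃ D : Matrix (Fin 3) (Fin 3) ℝ, DoublyStochastic D ∧
        D.charpoly = (X - C 1) * (X - C lam) * (X - C mu)) ↔
      (∃ D : Matrix (Fin 3) (Fin 3) ℝ, D.IsSymm ∧ DoublyStochastic D ∧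
        D.charpoly = (X - C 1) * (X - C lam) * (X - C mu)) := by
  constructor
  · intro hD
    rcases le_total mu lam with hml | hml
    · exact forward_aux lam mu hml hD
    · have hswap : ∀ (q : Polynomial ℝ), (X - C 1) * (X - C mu) * (X - C lam) = q →
        (X - C 1) * (X - C lam) * (X - C mu) = q := by
        intro q hq; rw [← hq]; ring
      obtain ⟨S, hs1, hs2, hs3⟩ := forward_aux mu lam hml
        (by obtain ⟨M, hM1, hM2⟩ := hD; exact ⟨M, hM1, by rw [hM2]; ring⟩)
      exact ⟨S, hs1, hs2, by rw [hs3]; ring⟩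
  · rintro ⟨D, _, hDS, hcp⟩
    exact ⟨D, hDS, hcp⟩
end

section
/- Let n ≥ 2 and let 1 ≥ λ₂ ≥ ... ≥ λₙ ≥ −1 be real numbers. If both 1 − (n−1)λ₂ + λ₃ + λ₄ + ... + λₙ ≥ 0 and 1 + (n−1)λₙ ≥ 0 hold, then there exists an n×n doubly stochastic matrix D whose eigenvalues, counted with algebraic multiplicity, are 1, λ₂, ..., λₙ. -/
open Matrix Polynomial

noncomputable section RdiepAux


/-- Unnormalized Soules vector entries. -/
def uvec (n k i : ℕ) : ℝ :=
  if k = 0 then 1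
  else if i + k < n then 1 else if i + k = n then -((n : ℝ) - k) else 0

/-- Squared norm of the Soules vectors. -/
def nrm (n k : ℕ) : ℝ :=
  if k = 0 then n else ((n : ℝ) - k) * ((n : ℝ) - k + 1)

lemma nrm_pos {n k : ℕ} (hn : 0 < n) (hk : k < n) : 0 < nrm n k := by
  unfold nrm
  split_ifs
  · exact_mod_cast hn
  · have h1 : (k : ℝ) + 1 ≤ n := by exact_mod_cast hk
    nlinarith

lemma uvec_sum {n k : ℕ} (hn : 0 < n) (hk : k < n) :
    ∑ i ∈ Finset.range n, uvec n k i = if k = 0 then (n : ℝ) else 0 := by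
  rcases Nat.eq_zero_or_pos k with rfl | hk0
  · simp [uvec]
  · have hkne : k ≠ 0 := hk0.ne'
    rw [if_neg hkne]
    have hsplit : ∀ i, uvec n k i =
        (if i < n - k then (1 : ℝ) else 0) + (if i = n - k then -((n : ℝ) - k) else 0) := by
      intro i
      unfold uvec
      rw [if_neg hkne]
      split_ifs <;> (first | ring1 | (exfalso; omega))
    rw [Finset.sum_congr rfl fun i _ => hsplit i, Finset.sum_add_distrib]
    have h1 : ∑ i ∈ Finset.range n, (if i < n - k then (1 : ℝ) else 0) = (n - k : ℕ) := by
      rw [← Finset.sum_filter]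
      have : (Finset.range n).filter (fun i => i < n - k) = Finset.range (n - k) := by
        ext i; simp [Finset.mem_range]; omega
      simp [this]
    have h2 : ∑ i ∈ Finset.range n, (if i = n - k then -((n : ℝ) - k) else 0)
        = -((n : ℝ) - k) := by
      rw [Finset.sum_ite_eq' (Finset.range n) (n - k) (fun _ => -((n : ℝ) - k))]
      rw [if_pos (Finset.mem_range.mpr (by omega))]
    rw [h1, h2]
    have : ((n - k : ℕ) : ℝ) = (n : ℝ) - k := by
      push_cast [Nat.cast_sub hk.le]; ring
    rw [this]; ring

lemma uvec_mul_lt {n k l i : ℕ} (h : k < l) :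
    uvec n k i * uvec n l i = uvec n l i := by
  unfold uvec
  have hl : l ≠ 0 := by omega
  rw [if_neg hl]
  by_cases h0 : k = 0
  · rw [if_pos h0, one_mul]
  · rw [if_neg h0]
    split_ifs <;> (first | ring1 | (exfalso; omega))

lemma uvec_dot {n k l : ℕ} (hn : 0 < n) (hk : k < n) (hl : l < n) :
    ∑ i ∈ Finset.range n, uvec n k i * uvec n l i = if k = l then nrm n k else 0 := by
  rcases lt_trichotomy k l with h | rfl | h
  · rw [if_neg h.ne]
    rw [Finset.sum_congr rfl fun i _ => uvec_mul_lt h]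
    rw [uvec_sum hn hl, if_neg (by omega)]
  · rw [if_pos rfl]
    rcases Nat.eq_zero_or_pos k with rfl | hk0
    · simp [uvec, nrm]
    · have hkne : k ≠ 0 := hk0.ne'
      have hsplit : ∀ i, uvec n k i * uvec n k i =
          (if i < n - k then (1 : ℝ) else 0)
          + (if i = n - k then ((n : ℝ) - k) ^ 2 else 0) := by
        intro i
        unfold uvec
        rw [if_neg hkne]
        split_ifs <;> (first | ring1 | (exfalso; omega))
      rw [Finset.sum_congr rfl fun i _ => hsplit i, Finset.sum_add_distrib]
      have h1 : ∑ i ∈ Finset.range n, (if i < n - k then (1 : ℝ) else 0) = (n - k : ℕ) := by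
        rw [← Finset.sum_filter]
        have : (Finset.range n).filter (fun i => i < n - k) = Finset.range (n - k) := by
          ext i; simp [Finset.mem_range]; omega
        simp [this]
      have h2 : ∑ i ∈ Finset.range n, (if i = n - k then ((n : ℝ) - k) ^ 2 else 0)
          = ((n : ℝ) - k) ^ 2 := by
        rw [Finset.sum_ite_eq' (Finset.range n) (n - k) (fun _ => ((n : ℝ) - k) ^ 2)]
        rw [if_pos (Finset.mem_range.mpr (by omega))]
      rw [h1, h2]
      have : ((n - k : ℕ) : ℝ) = (n : ℝ) - k := by
        push_cast [Nat.cast_sub hk.le]; ring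
      rw [this]
      unfold nrm
      rw [if_neg hkne]; ring
  · rw [if_neg h.ne']
    rw [Finset.sum_congr rfl fun i _ =>
      (mul_comm (uvec n k i) (uvec n l i)).trans (uvec_mul_lt h)]
    rw [uvec_sum hn hk, if_neg (by omega)]


lemma key_nonneg (n : ℕ) (hn : 2 ≤ n) (L : ℕ → ℝ)
    (hle1 : ∀ a, 2 ≤ a → a ≤ n → L a ≤ 1)
    (hmono : ∀ a b : ℕ, 2 ≤ a → a ≤ b → b ≤ n → L b ≤ L a)
    (hcond2 : 0 ≤ 1 + ((n : ℝ) - 1) * L n)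
    (I J : ℕ) (hIJ : I ≤ J) (hJ : J < n) :
    0 ≤ ∑ k ∈ Finset.range n,
        (if k = 0 then 1 else L (k + 1)) * (uvec n k I * uvec n k J) / nrm n k := by
  have hn0 : 0 < n := by omega
  have hnR : (0:ℝ) < n := by exact_mod_cast hn0
  set g : ℕ → ℝ := fun k => ((n:ℝ) + 1 - k)⁻¹ with hg
  set F : ℕ → ℝ :=
    fun k => (if k = 0 then 1 else L (k + 1)) * (uvec n k I * uvec n k J) / nrm n k with hF
  show 0 ≤ ∑ k ∈ Finset.range n, F k
  have hcast : ∀ k : ℕ, k < n → (1:ℝ) ≤ (n:ℝ) - k := by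
    intro k h
    have : (k:ℝ) + 1 ≤ n := by exact_mod_cast h
    linarith
  have hstep : ∀ k, 1 ≤ k → k < n → g (k+1) - g k = (nrm n k)⁻¹ := by
    intro k h1 h2
    have ha := hcast k h2
    have hnrmk : nrm n k = ((n:ℝ) - k) * ((n:ℝ) - k + 1) := by
      unfold nrm; rw [if_neg (by omega)]
    simp only [hg, hnrmk]
    push_cast
    have h3 : (n:ℝ) + 1 - ((k:ℝ) + 1) = (n:ℝ) - k := by ring
    have h4 : (n:ℝ) + 1 - (k:ℝ) = ((n:ℝ) - k) + 1 := by ring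
    rw [h3, h4]
    have e1 : (n:ℝ) - k ≠ 0 := by linarith
    have e2 : (n:ℝ) - k + 1 ≠ 0 := by linarith
    field_simp
    ring
  have hstep_nonneg : ∀ k, 1 ≤ k → k < n → 0 ≤ g (k+1) - g k := by
    intro k h1 h2
    rw [hstep k h1 h2]
    exact inv_nonneg.mpr (le_of_lt (nrm_pos hn0 h2))
  have htel : ∀ a b : ℕ, a ≤ b → ∑ k ∈ Finset.Ico a b, (g (k+1) - g k) = g b - g a := by
    intro a b hab
    rw [Finset.sum_Ico_eq_sub _ hab, Finset.sum_range_sub g, Finset.sum_range_sub g]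
    ring
  have hFval : ∀ k, 1 ≤ k → k + J < n → F k = L (k + 1) * (g (k+1) - g k) := by
    intro k h1 h2
    have hkn : k < n := by omega
    have hu1 : uvec n k I = 1 := by
      unfold uvec; rw [if_neg (by omega), if_pos (by omega)]
    have hu2 : uvec n k J = 1 := by
      unfold uvec; rw [if_neg (by omega), if_pos (by omega)]
    simp only [hF]
    rw [if_neg (by omega : ¬ k = 0), hu1, hu2, hstep k h1 hkn]
    ring
  have hg1 : g 1 = ((n:ℝ))⁻¹ := by simp [hg]
  have hF0 : F 0 = (n:ℝ)⁻¹ := by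
    simp only [hF]
    unfold uvec nrm
    norm_num
  have hsplit0 : ∑ k ∈ Finset.range n, F k = F 0 + ∑ k ∈ Finset.Ico 1 n, F k := by
    rw [Finset.range_eq_Ico, Finset.sum_eq_sum_Ico_succ_bot hn0]
  rcases eq_or_lt_of_le hIJ with rfl | hlt
  · -- diagonal case
    rcases Nat.eq_zero_or_pos I with rfl | hI0
    · -- diagonal, I = J = 0
      have hbound : ∀ k ∈ Finset.Ico 1 n, L n * (g (k+1) - g k) ≤ F k := by
        intro k hk
        obtain ⟨h1, h2⟩ := Finset.mem_Ico.mp hk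
        rw [hFval k h1 (by omega)]
        exact mul_le_mul_of_nonneg_right
          (hmono (k+1) n (by omega) (by omega) le_rfl) (hstep_nonneg k h1 h2)
      have hsum := Finset.sum_le_sum hbound
      rw [← Finset.mul_sum, htel 1 n (by omega), hg1] at hsum
      have hgn : g n = 1 := by
        simp only [hg]
        have : (n:ℝ) + 1 - (n:ℝ) = 1 := by ring
        rw [this]; norm_num
      rw [hgn] at hsum
      rw [hsplit0, hF0]
      have hfin : 0 ≤ (n:ℝ)⁻¹ + L n * (1 - (n:ℝ)⁻¹) := by
        have h5 : (n:ℝ)⁻¹ + L n * (1 - (n:ℝ)⁻¹) = (1 + ((n:ℝ) - 1) * L n) / n := by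
          field_simp
        rw [h5]
        exact div_nonneg hcond2 (le_of_lt hnR)
      linarith
    · -- diagonal, I = J ≥ 1
      set m := n - I with hm
      have hm1 : 1 ≤ m := by omega
      have hmn : m < n := by omega
      have hcastm : ((m:ℕ):ℝ) = (n:ℝ) - I := by
        rw [hm]; push_cast [Nat.cast_sub hJ.le]; ring
      have hjR : (1:ℝ) ≤ (I:ℝ) := by exact_mod_cast hI0
      have hnm : (n:ℝ) - m = (I:ℝ) := by rw [hcastm]; ring
      have hs1 : ∑ k ∈ Finset.Ico 1 n, F k
          = ∑ k ∈ Finset.Ico 1 (m+1), F k + ∑ k ∈ Finset.Ico (m+1) n, F k :=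
        (Finset.sum_Ico_consecutive F (by omega) (by omega)).symm
      have hs2 : ∑ k ∈ Finset.Ico 1 (m+1), F k = ∑ k ∈ Finset.Ico 1 m, F k + F m :=
        Finset.sum_Ico_succ_top hm1 F
      have hzero : ∀ k ∈ Finset.Ico (m+1) n, F k = 0 := by
        intro k hk
        obtain ⟨h1, h2⟩ := Finset.mem_Ico.mp hk
        have hu : uvec n k I = 0 := by
          unfold uvec; rw [if_neg (by omega), if_neg (by omega), if_neg (by omega)]
        simp only [hF]
        rw [hu, zero_mul, mul_zero, zero_div]
      have hFm : F m = L (m+1) * ((I:ℝ) / ((I:ℝ) + 1)) := by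
        have hu : uvec n m I = -(I:ℝ) := by
          unfold uvec
          rw [if_neg (by omega), if_neg (by omega), if_pos (by omega), hnm]
        have hnrmm : nrm n m = (I:ℝ) * ((I:ℝ) + 1) := by
          unfold nrm; rw [if_neg (by omega), hnm]
        simp only [hF]
        rw [if_neg (by omega : ¬ m = 0), hu, hnrmm]
        have e1 : (I:ℝ) ≠ 0 := by linarith
        have e2 : (I:ℝ) + 1 ≠ 0 := by linarith
        field_simp
      have hgm : g m = ((I:ℝ) + 1)⁻¹ := by
        simp only [hg]
        have : (n:ℝ) + 1 - (m:ℝ) = (I:ℝ) + 1 := by rw [hcastm]; ring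
        rw [this]
      have hbound : ∀ k ∈ Finset.Ico 1 m, L n * (g (k+1) - g k) ≤ F k := by
        intro k hk
        obtain ⟨h1, h2⟩ := Finset.mem_Ico.mp hk
        rw [hFval k h1 (by omega)]
        exact mul_le_mul_of_nonneg_right
          (hmono (k+1) n (by omega) (by omega) le_rfl) (hstep_nonneg k h1 (by omega))
      have hsum := Finset.sum_le_sum hbound
      rw [← Finset.mul_sum, htel 1 m hm1, hg1, hgm] at hsum
      have hFmb : L n * ((I:ℝ) / ((I:ℝ) + 1)) ≤ F m := by
        rw [hFm]
        apply mul_le_mul_of_nonneg_right (hmono (m+1) n (by omega) (by omega) le_rfl)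
        positivity
      have hfin : 0 ≤ (n:ℝ)⁻¹ + L n * (((I:ℝ) + 1)⁻¹ - (n:ℝ)⁻¹)
          + L n * ((I:ℝ) / ((I:ℝ) + 1)) := by
        have e2 : (I:ℝ) + 1 ≠ 0 := by linarith
        have h5 : (n:ℝ)⁻¹ + L n * (((I:ℝ) + 1)⁻¹ - (n:ℝ)⁻¹) + L n * ((I:ℝ) / ((I:ℝ) + 1))
            = (1 + ((n:ℝ) - 1) * L n) / n := by
          field_simp
          ring
        rw [h5]
        exact div_nonneg hcond2 (le_of_lt hnR)
      rw [hsplit0, hs1, hs2, Finset.sum_eq_zero hzero, hF0]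
      linarith
  · -- off-diagonal case I < J
    set m := n - J with hm
    have hm1 : 1 ≤ m := by omega
    have hmn : m < n := by omega
    have hcastm : ((m:ℕ):ℝ) = (n:ℝ) - J := by
      rw [hm]; push_cast [Nat.cast_sub hJ.le]; ring
    have hJ1 : 1 ≤ J := by omega
    have hjR : (1:ℝ) ≤ (J:ℝ) := by exact_mod_cast hJ1
    have hnm : (n:ℝ) - m = (J:ℝ) := by rw [hcastm]; ring
    have hs1 : ∑ k ∈ Finset.Ico 1 n, F k
        = ∑ k ∈ Finset.Ico 1 (m+1), F k + ∑ k ∈ Finset.Ico (m+1) n, F k :=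
      (Finset.sum_Ico_consecutive F (by omega) (by omega)).symm
    have hs2 : ∑ k ∈ Finset.Ico 1 (m+1), F k = ∑ k ∈ Finset.Ico 1 m, F k + F m :=
      Finset.sum_Ico_succ_top hm1 F
    have hzero : ∀ k ∈ Finset.Ico (m+1) n, F k = 0 := by
      intro k hk
      obtain ⟨h1, h2⟩ := Finset.mem_Ico.mp hk
      have hu : uvec n k J = 0 := by
        unfold uvec; rw [if_neg (by omega), if_neg (by omega), if_neg (by omega)]
      simp only [hF]
      rw [hu, mul_zero, mul_zero, zero_div]
    set c : ℝ := L (m + 1) with hc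
    have hFm : F m = -(c * ((J:ℝ) + 1)⁻¹) := by
      have hu1 : uvec n m I = 1 := by
        unfold uvec; rw [if_neg (by omega), if_pos (by omega)]
      have hu2 : uvec n m J = -(J:ℝ) := by
        unfold uvec
        rw [if_neg (by omega), if_neg (by omega), if_pos (by omega), hnm]
      have hnrmm : nrm n m = (J:ℝ) * ((J:ℝ) + 1) := by
        unfold nrm; rw [if_neg (by omega), hnm]
      simp only [hF]
      rw [if_neg (by omega : ¬ m = 0), hu1, hu2, hnrmm]
      have e1 : (J:ℝ) ≠ 0 := by linarith
      have e2 : (J:ℝ) + 1 ≠ 0 := by linarith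
      field_simp
      ring
    have hgm : g m = ((J:ℝ) + 1)⁻¹ := by
      simp only [hg]
      have : (n:ℝ) + 1 - (m:ℝ) = (J:ℝ) + 1 := by rw [hcastm]; ring
      rw [this]
    have hbound : ∀ k ∈ Finset.Ico 1 m, c * (g (k+1) - g k) ≤ F k := by
      intro k hk
      obtain ⟨h1, h2⟩ := Finset.mem_Ico.mp hk
      rw [hFval k h1 (by omega)]
      exact mul_le_mul_of_nonneg_right
        (hmono (k+1) (m+1) (by omega) (by omega) (by omega)) (hstep_nonneg k h1 (by omega))
    have hsum := Finset.sum_le_sum hbound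
    rw [← Finset.mul_sum, htel 1 m hm1, hg1, hgm] at hsum
    have hc1 : c ≤ 1 := hle1 (m+1) (by omega) (by omega)
    have hfin : 0 ≤ (n:ℝ)⁻¹ + c * (((J:ℝ) + 1)⁻¹ - (n:ℝ)⁻¹) + -(c * ((J:ℝ) + 1)⁻¹) := by
      have e2 : (J:ℝ) + 1 ≠ 0 := by linarith
      have h5 : (n:ℝ)⁻¹ + c * (((J:ℝ) + 1)⁻¹ - (n:ℝ)⁻¹) + -(c * ((J:ℝ) + 1)⁻¹)
          = (1 - c) / n := by
        field_simp
        ring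
      rw [h5]
      exact div_nonneg (by linarith) (le_of_lt hnR)
    rw [hsplit0, hs1, hs2, Finset.sum_eq_zero hzero, hF0]
    linarith



lemma charpoly_conj_orth {n : ℕ} (Q A : Matrix (Fin n) (Fin n) ℝ) (h : Q * Qᵀ = 1) :
    (Q * A * Qᵀ).charpoly = A.charpoly := by
  classical
  have hmul : ∀ M N : Matrix (Fin n) (Fin n) ℝ,
      (M * N).map (C : ℝ →+* ℝ[X]) = M.map (C : ℝ →+* ℝ[X]) * N.map (C : ℝ →+* ℝ[X]) := by
    intro M N
    exact Matrix.map_mul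
  have hone : ((1 : Matrix (Fin n) (Fin n) ℝ)).map (C : ℝ →+* ℝ[X]) = 1 := Matrix.map_one _ (map_zero C) (map_one C)
  have key : charmatrix (Q * A * Qᵀ) =
      Q.map (C : ℝ →+* ℝ[X]) * charmatrix A * Qᵀ.map (C : ℝ →+* ℝ[X]) := by
    unfold charmatrix
    rw [RingHom.mapMatrix_apply, RingHom.mapMatrix_apply]
    rw [mul_sub, sub_mul]
    congr 1
    · have hc : Q.map (C : ℝ →+* ℝ[X]) * Matrix.scalar (Fin n) (X : ℝ[X])
          = Matrix.scalar (Fin n) (X : ℝ[X]) * Q.map (C : ℝ →+* ℝ[X]) :=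
        (Matrix.scalar_commute (X : ℝ[X]) (fun r => Commute.all _ _) _).symm
      rw [hc, Matrix.mul_assoc, ← hmul, h, hone, Matrix.mul_one]
    · rw [← hmul, ← hmul]
  rw [Matrix.charpoly, Matrix.charpoly, key, Matrix.det_mul, Matrix.det_mul]
  have hd : (Q.map (C : ℝ →+* ℝ[X])).det * (Qᵀ.map (C : ℝ →+* ℝ[X])).det = 1 := by
    rw [← Matrix.det_mul, ← hmul, h, hone, Matrix.det_one]
  calc (Q.map (C : ℝ →+* ℝ[X])).det * A.charmatrix.det * (Qᵀ.map (C : ℝ →+* ℝ[X])).det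
      = A.charmatrix.det * ((Q.map (C : ℝ →+* ℝ[X])).det * (Qᵀ.map (C : ℝ →+* ℝ[X])).det) := by
        ring
    _ = A.charmatrix.det := by rw [hd, mul_one]



lemma diag_charpoly_s13 {n : ℕ} (d : Fin n → ℝ) :
    (Matrix.diagonal d).charpoly = ∏ k : Fin n, (X - C (d k)) := by
  rw [Matrix.charpoly_of_upperTriangular _ (Matrix.blockTriangular_diagonal d)]
  simp [Matrix.diagonal_apply_eq]

lemma prod_reindex (n : ℕ) (hn : 1 ≤ n) (L : ℕ → ℝ) :
    ∏ k ∈ Finset.range n, (X - C (if k = 0 then (1:ℝ) else L (k + 1)))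
      = (X - C 1) * ∏ j ∈ Finset.Icc 2 n, (X - C (L j)) := by
  obtain ⟨m, rfl⟩ : ∃ m, n = m + 1 := ⟨n - 1, by omega⟩
  rw [Finset.prod_range_succ']
  rw [mul_comm]
  congr 1
  have h1 : Finset.Icc 2 (m + 1) = Finset.Ico 2 (m + 2) := by
    rw [← Finset.Ico_add_one_right_eq_Icc]; rfl
  rw [h1, Finset.prod_Ico_eq_prod_range]
  have h2 : m + 2 - 2 = m := by omega
  rw [h2]
  apply Finset.prod_congr rfl
  intro i _
  rw [if_neg (Nat.succ_ne_zero i)]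
  have : i + 1 + 1 = 2 + i := by omega
  rw [this]

end RdiepAux


/-- If `1 ≥ λ₂ ≥ ⋯ ≥ λₙ ≥ -1`, `1 - (n-1)λ₂ + λ₃ + ⋯ + λₙ ≥ 0` and `1 + (n-1)λₙ ≥ 0`,
then `1, λ₂, …, λₙ` is the spectrum of an `n × n` doubly stochastic matrix. -/
theorem rdiep_sufficient (n : ℕ) (hn : 2 ≤ n) (L : ℕ → ℝ) (hub : L 2 ≤ 1)
    (hdec : ∀ j, 2 ≤ j → j < n → L (j + 1) ≤ L j)
    (hlb : -1 ≤ L n)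
    (hcond1 : 0 ≤ 1 - ((n : ℝ) - 1) * L 2 + ∑ j ∈ Finset.Icc 3 n, L j)
    (hcond2 : 0 ≤ 1 + ((n : ℝ) - 1) * L n) :
    ∃ D : Matrix (Fin n) (Fin n) ℝ, DoublyStochastic D ∧
      D.charpoly = (X - C 1) * ∏ j ∈ Finset.Icc 2 n, (X - C (L j)) := by
  classical
  have hn0 : 0 < n := by omega
  have hnR : (0:ℝ) < n := by exact_mod_cast hn0
  -- monotonicity of L on [2, n]
  have hmono : ∀ a b : ℕ, 2 ≤ a → a ≤ b → b ≤ n → L b ≤ L a := by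
    intro a b ha hab hbn
    induction b with
    | zero => omega
    | succ m ih =>
      rcases Nat.eq_or_lt_of_le hab with h | h
      · exact le_of_eq (congrArg L h.symm)
      · exact le_trans (hdec m (by omega) (by omega)) (ih (by omega) (by omega))
  have hle1 : ∀ a, 2 ≤ a → a ≤ n → L a ≤ 1 :=
    fun a h1 h2 => le_trans (hmono 2 a le_rfl h1 h2) hub
  -- the orthogonal matrix and spectrum
  set μ : Fin n → ℝ := fun k => if (k:ℕ) = 0 then 1 else L ((k:ℕ) + 1) with hμ
  set Q : Matrix (Fin n) (Fin n) ℝ :=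
    Matrix.of (fun i k : Fin n => uvec n k i / Real.sqrt (nrm n k)) with hQ
  have hQQ : Qᵀ * Q = 1 := by
    ext k l
    rw [Matrix.mul_apply, Matrix.one_apply]
    simp only [hQ, Matrix.transpose_apply, Matrix.of_apply]
    have hP : ∀ i : Fin n,
        uvec n k i / Real.sqrt (nrm n k) * (uvec n l i / Real.sqrt (nrm n l))
        = uvec n k i * uvec n l i / (Real.sqrt (nrm n k) * Real.sqrt (nrm n l)) := by
      intro i; ring
    rw [Finset.sum_congr rfl fun i _ => hP i, ← Finset.sum_div]
    rw [Fin.sum_univ_eq_sum_range (fun i => uvec n k i * uvec n l i) n,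
      uvec_dot hn0 k.isLt l.isLt]
    by_cases hkl : k = l
    · subst hkl
      rw [if_pos rfl, if_pos rfl, Real.mul_self_sqrt (le_of_lt (nrm_pos hn0 k.isLt))]
      exact div_self (ne_of_gt (nrm_pos hn0 k.isLt))
    · rw [if_neg (fun h => hkl (Fin.ext h)), if_neg hkl, zero_div]
  have hQQ' : Q * Qᵀ = 1 := mul_eq_one_comm.mp hQQ
  -- entry formula
  have hD : ∀ i j : Fin n, (Q * Matrix.diagonal μ * Qᵀ) i j
      = ∑ k ∈ Finset.range n,
          (if k = 0 then 1 else L (k + 1)) * (uvec n k i * uvec n k j) / nrm n k := by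
    intro i j
    rw [Matrix.mul_apply]
    have h1 : ∀ k : Fin n, (Q * Matrix.diagonal μ) i k * Qᵀ k j
        = (if (k:ℕ) = 0 then 1 else L ((k:ℕ) + 1)) * (uvec n k i * uvec n k j) / nrm n k := by
      intro k
      rw [Matrix.mul_diagonal]
      simp only [hQ, hμ, Matrix.transpose_apply, Matrix.of_apply]
      have hs : Real.sqrt (nrm n k) * Real.sqrt (nrm n k) = nrm n k :=
        Real.mul_self_sqrt (le_of_lt (nrm_pos hn0 k.isLt))
      have harr : uvec n k i / Real.sqrt (nrm n k) * (if (k:ℕ) = 0 then 1 else L ((k:ℕ) + 1))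
            * (uvec n k j / Real.sqrt (nrm n k))
          = (if (k:ℕ) = 0 then 1 else L ((k:ℕ) + 1)) * (uvec n k i * uvec n k j)
            / (Real.sqrt (nrm n k) * Real.sqrt (nrm n k)) := by
        ring
      rw [harr, hs]
    rw [Finset.sum_congr rfl fun k _ => h1 k]
    exact Fin.sum_univ_eq_sum_range
      (fun k => (if k = 0 then 1 else L (k + 1)) * (uvec n k i * uvec n k j) / nrm n k) n
  -- row sums
  have hrow : ∀ i : Fin n, ∑ j, (Q * Matrix.diagonal μ * Qᵀ) i j = 1 := by
    intro i
    rw [Finset.sum_congr rfl fun j _ => hD i j, Finset.sum_comm]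
    have h2 : ∀ k ∈ Finset.range n,
        (∑ j : Fin n, (if k = 0 then (1:ℝ) else L (k+1)) * (uvec n k i * uvec n k j) / nrm n k)
        = if k = 0 then 1 else 0 := by
      intro k hk
      have hkn : k < n := Finset.mem_range.mp hk
      have hP : ∀ j : Fin n,
          (if k = 0 then (1:ℝ) else L (k+1)) * (uvec n k i * uvec n k j) / nrm n k
          = ((if k = 0 then (1:ℝ) else L (k+1)) * uvec n k i / nrm n k) * uvec n k j := by
        intro j; ring
      rw [Finset.sum_congr rfl fun j _ => hP j, ← Finset.mul_sum,
        Fin.sum_univ_eq_sum_range (fun j => uvec n k j) n, uvec_sum hn0 hkn]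
      by_cases h0 : k = 0
      · subst h0
        rw [if_pos rfl, if_pos rfl, if_pos rfl]
        unfold uvec nrm
        rw [if_pos rfl, if_pos rfl]
        field_simp
      · simp [h0]
    rw [Finset.sum_congr rfl h2, Finset.sum_ite_eq' (Finset.range n) 0 (fun _ => (1:ℝ)),
      if_pos (Finset.mem_range.mpr hn0)]
  -- symmetry
  have hsym : ∀ i j : Fin n, (Q * Matrix.diagonal μ * Qᵀ) i j = (Q * Matrix.diagonal μ * Qᵀ) j i := by
    intro i j
    rw [hD i j, hD j i]
    exact Finset.sum_congr rfl fun k _ => by ring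
  refine ⟨Q * Matrix.diagonal μ * Qᵀ, ⟨?_, hrow, ?_⟩, ?_⟩
  · -- nonnegativity
    intro i j
    rcases le_total (i:ℕ) (j:ℕ) with h | h
    · rw [hD i j]
      exact key_nonneg n hn L hle1 hmono hcond2 i j h j.isLt
    · rw [hsym i j, hD j i]
      exact key_nonneg n hn L hle1 hmono hcond2 j i h i.isLt
  · -- column sums
    intro j
    rw [Finset.sum_congr rfl fun i _ => hsym i j]
    exact hrow j
  · -- characteristic polynomial
    rw [charpoly_conj_orth Q (Matrix.diagonal μ) hQQ', diag_charpoly_s13 μ]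
    rw [← prod_reindex n (by omega) L]
    exact Fin.prod_univ_eq_prod_range (fun k => X - C (if k = 0 then (1:ℝ) else L (k + 1))) n
end

section
/- Let 1 ≥ λ₂ ≥ λ₃ ≥ λ₄ ≥ λ₅ ≥ λ₆ ≥ −1 be real numbers with 1 + λ₂ + λ₃ + λ₄ + λ₅ + λ₆ ≥ 0. If 1/6 + λ₂/6 + 2λ₆/3 ≥ 0, 1/6 + λ₂/6 − 2λ₃/3 + λ₄/3 ≥ 0, and 1/6 + λ₂/6 − 2λ₅/3 + λ₆/3 ≥ 0, then there exists a 6×6 doubly stochastic matrix whose eigenvalues, counted with algebraic multiplicity, are 1, λ₂, λ₃, λ₄, λ₅, λ₆. -/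
open Matrix Polynomial

/-- Characteristic polynomials of similar matrices agree. -/
lemma charpoly_eq_of_mul_eq {n : ℕ} (D Q L : Matrix (Fin n) (Fin n) ℝ)
    (h : D * Q = Q * L) (hQ : Q.det ≠ 0) : D.charpoly = L.charpoly := by
  have key : D.charmatrix * (C : ℝ →+* ℝ[X]).mapMatrix Q
      = (C : ℝ →+* ℝ[X]).mapMatrix Q * L.charmatrix := by
    have h2 : (C : ℝ →+* ℝ[X]).mapMatrix (D * Q) = (C : ℝ →+* ℝ[X]).mapMatrix (Q * L) := by
      rw [h]
    rw [_root_.map_mul, _root_.map_mul] at h2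
    rw [charmatrix, charmatrix, sub_mul, mul_sub,
      (scalar_commute (X : ℝ[X]) (fun r => Commute.all _ _) _).eq, h2]
  have hdet := congrArg det key
  rw [det_mul, det_mul] at hdet
  have hQdet : det ((C : ℝ →+* ℝ[X]).mapMatrix Q) = C Q.det := (RingHom.map_det C Q).symm
  rw [hQdet, mul_comm (C Q.det) _] at hdet
  exact mul_right_cancel₀ (by simpa using hQ) hdet

/-- The doubly stochastic matrix realizing the spectrum `1, l2, …, l6`. -/
noncomputable def Dmat (l2 l3 l4 l5 l6 : ℝ) : Matrix (Fin 6) (Fin 6) ℝ :=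
  !![1/6+l2/6+l3/2+l4/6, 1/6+l2/6-l3/2+l4/6, 1/6+l2/6-l4/3, (1-l2)/6, (1-l2)/6, (1-l2)/6;
     1/6+l2/6-l3/2+l4/6, 1/6+l2/6+l3/2+l4/6, 1/6+l2/6-l4/3, (1-l2)/6, (1-l2)/6, (1-l2)/6;
     1/6+l2/6-l4/3, 1/6+l2/6-l4/3, 1/6+l2/6+2*l4/3, (1-l2)/6, (1-l2)/6, (1-l2)/6;
     (1-l2)/6, (1-l2)/6, (1-l2)/6, 1/6+l2/6+l5/2+l6/6, 1/6+l2/6-l5/2+l6/6, 1/6+l2/6-l6/3;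
     (1-l2)/6, (1-l2)/6, (1-l2)/6, 1/6+l2/6-l5/2+l6/6, 1/6+l2/6+l5/2+l6/6, 1/6+l2/6-l6/3;
     (1-l2)/6, (1-l2)/6, (1-l2)/6, 1/6+l2/6-l6/3, 1/6+l2/6-l6/3, 1/6+l2/6+2*l6/3]

/-- The matrix of eigenvectors of `Dmat`. -/
noncomputable def Qm : Matrix (Fin 6) (Fin 6) ℝ :=
  !![1,1,1,1,0,0; 1,1,-1,1,0,0; 1,1,0,-2,0,0; 1,-1,0,0,1,1; 1,-1,0,0,-1,1; 1,-1,0,0,0,-2]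

/-- The inverse of `Qm`. -/
noncomputable def Qinv : Matrix (Fin 6) (Fin 6) ℝ :=
  !![1/6,1/6,1/6,1/6,1/6,1/6; 1/6,1/6,1/6,-1/6,-1/6,-1/6; 1/2,-1/2,0,0,0,0;
     1/6,1/6,-1/3,0,0,0; 0,0,0,1/2,-1/2,0; 0,0,0,1/6,1/6,-1/3]

lemma Qm_mul_Qinv : Qm * Qinv = 1 := by
  ext i j
  fin_cases i <;> fin_cases j <;>
    simp [Qm, Qinv, Matrix.mul_apply, Fin.sum_univ_six, Matrix.one_apply,
      show (5:Fin 6) = Fin.succ 4 from rfl, Matrix.cons_val_succ, Matrix.vecHead,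
      Matrix.vecTail] <;> norm_num

lemma Qm_det_ne_zero : Qm.det ≠ 0 := by
  intro h
  have h1 : Qm.det * Qinv.det = 1 := by rw [← det_mul, Qm_mul_Qinv, det_one]
  rw [h, zero_mul] at h1
  exact zero_ne_one h1

set_option maxHeartbeats 4000000 in
lemma Dmat_mul_Qm (l2 l3 l4 l5 l6 : ℝ) :
    Dmat l2 l3 l4 l5 l6 * Qm = Qm * Matrix.diagonal ![1, l2, l3, l4, l5, l6] := by
  ext i j
  rw [Matrix.mul_diagonal]
  fin_cases i <;> fin_cases j <;>
    simp [Dmat, Qm, Matrix.mul_apply, Fin.sum_univ_six,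
      show (5:Fin 6) = Fin.succ 4 from rfl, Matrix.cons_val_succ, Matrix.vecHead,
      Matrix.vecTail] <;> ring

lemma Dmat_charpoly (l2 l3 l4 l5 l6 : ℝ) :
    (Dmat l2 l3 l4 l5 l6).charpoly = (X - C 1) * (X - C l2) * (X - C l3) * (X - C l4) *
      (X - C l5) * (X - C l6) := by
  rw [charpoly_eq_of_mul_eq _ Qm (Matrix.diagonal ![1, l2, l3, l4, l5, l6])
      (Dmat_mul_Qm l2 l3 l4 l5 l6) Qm_det_ne_zero,
    charpoly_of_upperTriangular _ (Matrix.blockTriangular_diagonal _), Fin.prod_univ_six]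
  simp [show (5:Fin 6) = Fin.succ 4 from rfl, Matrix.cons_val_succ, Matrix.vecHead,
    Matrix.vecTail]

set_option maxHeartbeats 1000000 in
/-- If `1 ≥ λ₂ ≥ ⋯ ≥ λ₆ ≥ -1` with `1 + λ₂ + ⋯ + λ₆ ≥ 0`, and
`1/6 + λ₂/6 + 2λ₆/3 ≥ 0`, `1/6 + λ₂/6 - 2λ₃/3 + λ₄/3 ≥ 0`,
`1/6 + λ₂/6 - 2λ₅/3 + λ₆/3 ≥ 0`, then `1, λ₂, …, λ₆` is the spectrum of a `6 × 6`
doubly stochastic matrix. -/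
theorem rdiep_six (l2 l3 l4 l5 l6 : ℝ) (h2 : l2 ≤ 1) (h3 : l3 ≤ l2) (h4 : l4 ≤ l3)
    (h5 : l5 ≤ l4) (h6 : l6 ≤ l5) (hlb : -1 ≤ l6)
    (htr : 0 ≤ 1 + l2 + l3 + l4 + l5 + l6)
    (hc1 : 0 ≤ 1 / 6 + l2 / 6 + 2 * l6 / 3)
    (hc2 : 0 ≤ 1 / 6 + l2 / 6 - 2 * l3 / 3 + l4 / 3)
    (hc3 : 0 ≤ 1 / 6 + l2 / 6 - 2 * l5 / 3 + l6 / 3) :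
    ∃ D : Matrix (Fin 6) (Fin 6) ℝ, DoublyStochastic D ∧
      D.charpoly = (X - C 1) * (X - C l2) * (X - C l3) * (X - C l4) * (X - C l5) *
        (X - C l6) := by
  refine ⟨Dmat l2 l3 l4 l5 l6, ⟨?_, ?_, ?_⟩, Dmat_charpoly l2 l3 l4 l5 l6⟩
  · intro i j
    fin_cases i <;> fin_cases j <;>
      simp [Dmat, show (5:Fin 6) = Fin.succ 4 from rfl, Matrix.cons_val_succ, Matrix.vecHead,
        Matrix.vecTail] <;> linarith
  · intro i
    fin_cases i <;>
      simp [Dmat, Fin.sum_univ_six, show (5:Fin 6) = Fin.succ 4 from rfl, Matrix.cons_val_succ,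
        Matrix.vecHead, Matrix.vecTail] <;> ring
  · intro j
    fin_cases j <;>
      simp [Dmat, Fin.sum_univ_six, show (5:Fin 6) = Fin.succ 4 from rfl, Matrix.cons_val_succ,
        Matrix.vecHead, Matrix.vecTail] <;> ring
end
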